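/- arXiv:0711.3496 — 9 statements merged into one kernel-verified Lean document; each statement's English description precedes it below -/
import Mathlib

section
/- If Q(t) = ∑_{i=0}^k a_i t^i is a univariate polynomial of degree k ≥ 2 with nonnegative coefficients and all real roots, and C = inf_{t>0} Q(t)/t, then Q'(0) ≥ ((k-1)/k)^{k-1} · C. -/
open Polynomial Finset


/-- AM-GM: product ≤ (sum/n)^n. -/
private lemma amgm_aux {n : ℕ} (hn : 0 < n) (y : Fin n → ℝ) (hy : ∀ i, 0 ≤ y i) :
    ∏ i, y i ≤ ((∑ i, y i) / n) ^ n := by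
  have hn' : (0:ℝ) < n := by exact_mod_cast hn
  have key : ∏ i, (y i) ^ ((n:ℝ)⁻¹) ≤ (∑ i, y i) / n := by
    have h := Real.geom_mean_le_arith_mean_weighted Finset.univ (fun _ => (n:ℝ)⁻¹) y
      (fun i _ => by positivity)
      (by simp [Finset.card_univ]; field_simp) (fun i _ => hy i)
    calc ∏ i, (y i) ^ ((n:ℝ)⁻¹) ≤ ∑ i, (n:ℝ)⁻¹ * y i := h
    _ = (∑ i, y i) / n := by rw [← Finset.mul_sum]; ring
  have h1 : ∏ i, y i = (∏ i, (y i) ^ ((n:ℝ)⁻¹)) ^ n := by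
    rw [← Finset.prod_pow]
    refine Finset.prod_congr rfl fun i _ => ?_
    rw [← Real.rpow_natCast ((y i) ^ ((n:ℝ)⁻¹)) n, ← Real.rpow_mul (hy i),
      inv_mul_cancel₀ (ne_of_gt hn'), Real.rpow_one]
  rw [h1]
  exact pow_le_pow_left₀ (Finset.prod_nonneg fun i _ => Real.rpow_nonneg (hy i) _) key n

private lemma eval_pos_aux (Q : Polynomial ℝ) (hcoeff : ∀ i, 0 ≤ Q.coeff i)
    (hlead : 0 < Q.leadingCoeff) {t : ℝ} (ht : 0 < t) : 0 < Q.eval t := by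
  rw [Polynomial.eval_eq_sum_range]
  have hl' : 0 < Q.coeff Q.natDegree := by rwa [Polynomial.coeff_natDegree]
  have h1 : Q.coeff Q.natDegree * t ^ Q.natDegree ≤
      ∑ i ∈ Finset.range (Q.natDegree + 1), Q.coeff i * t ^ i :=
    Finset.single_le_sum (f := fun i => Q.coeff i * t ^ i)
      (fun i _ => mul_nonneg (hcoeff i) (by positivity))
      (Finset.self_mem_range_succ Q.natDegree)
  have h2 : 0 < Q.coeff Q.natDegree * t ^ Q.natDegree := by positivity
  linarith

private lemma exists_fin_factorization (Q : Polynomial ℝ) (k : ℕ) (hdeg : Q.natDegree = k)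
    (hlead : Q.leadingCoeff ≠ 0)
    (hroots : ∀ z : ℂ, (Q.map (algebraMap ℝ ℂ)).IsRoot z → z.im = 0) :
    ∃ ρ : Fin k → ℝ, Q = Polynomial.C Q.leadingCoeff * ∏ i, (Polynomial.X - Polynomial.C (ρ i)) := by
  have hQ0 : Q ≠ 0 := fun h => by simp [h] at hlead
  set f := algebraMap ℝ ℂ with hf
  have hsp : ((Q.map f)).Splits := IsAlgClosed.splits _
  have heq := hsp.eq_prod_roots
  set T := (Q.map f).roots with hT
  have hTreal : ∀ z ∈ T, ((z.re : ℝ) : ℂ) = z := by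
    intro z hz
    have him := hroots z (Polynomial.isRoot_of_mem_roots hz)
    exact Complex.ext rfl (by simpa using him.symm)
  -- real multiset
  set R : Multiset ℝ := T.map Complex.re with hR
  have hfacR : Q = Polynomial.C Q.leadingCoeff * (R.map fun x => Polynomial.X - Polynomial.C x).prod := by
    apply Polynomial.map_injective f f.injective
    rw [heq, Polynomial.map_mul, Polynomial.map_C]
    congr 1
    · rw [Polynomial.leadingCoeff_map]
    · rw [← Polynomial.coe_mapRingHom, map_multiset_prod, Multiset.map_map, hR,
        Multiset.map_map]
      refine congrArg _ (Multiset.map_congr rfl fun z hz => ?_).symm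
      simp only [Function.comp_apply, Polynomial.coe_mapRingHom, Polynomial.map_sub,
        Polynomial.map_X, Polynomial.map_C]
      rw [show f z.re = ((z.re : ℝ) : ℂ) from rfl, hTreal z hz]
  have hcard : R.card = k := by
    rw [hR, Multiset.card_map, hT, (Polynomial.splits_iff_card_roots).mp hsp,
      Polynomial.natDegree_map, hdeg]
  -- to a list / Fin k
  set l := R.toList with hl
  have hRl : R = ↑l := (Multiset.coe_toList R).symm
  have hlen : l.length = k := by rw [← hcard, hRl]; simp
  refine ⟨fun i => l.get (Fin.cast hlen.symm i), ?_⟩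
  conv_lhs => rw [hfacR]
  rw [hRl, Multiset.map_coe, Multiset.prod_coe, ← List.ofFn_getElem_eq_map, List.prod_ofFn]
  congr 1
  exact Fintype.prod_equiv (finCongr hlen) _ _ (fun i => rfl)


/-- If Q(t) = ∑ a_i t^i has degree k ≥ 2, nonnegative coefficients,
positive leading coefficient, and all real roots, and C = inf_{t>0} Q(t)/t, then
Q'(0) ≥ ((k-1)/k)^{k-1} · C. -/
theorem stmt_0 (Q : Polynomial ℝ) (k : ℕ) (hk : 2 ≤ k) (hdeg : Q.natDegree = k)
    (hlead : 0 < Q.leadingCoeff)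
    (hcoeff : ∀ i, 0 ≤ Q.coeff i)
    (hroots : ∀ z : ℂ, (Q.map (algebraMap ℝ ℂ)).IsRoot z → z.im = 0)
    (C : ℝ) (hC : C = sInf {c : ℝ | ∃ t : ℝ, 0 < t ∧ c = Q.eval t / t}) :
    Q.derivative.eval 0 ≥ (((k : ℝ) - 1) / k) ^ (k - 1) * C := by
  obtain ⟨ρ, hfac⟩ := exists_fin_factorization Q k hdeg (ne_of_gt hlead) hroots
  set a := Q.leadingCoeff with ha
  have hnpos : (0:ℝ) < k := by positivity
  have hn1 : (0:ℝ) < (k:ℝ) - 1 := by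
    have : (2:ℝ) ≤ k := by exact_mod_cast hk
    linarith
  -- evaluation formula
  have hQeval : ∀ t : ℝ, Q.eval t = a * ∏ i, (t - ρ i) := by
    intro t
    conv_lhs => rw [hfac]
    simp [Polynomial.eval_prod]
  -- roots nonpositive
  have hρ : ∀ i, ρ i ≤ 0 := by
    intro i
    by_contra hpos
    push_neg at hpos
    have h0 : Q.eval (ρ i) = 0 := by
      rw [hQeval]
      rw [Finset.prod_eq_zero (Finset.mem_univ i) (by ring)]
      ring
    have := eval_pos_aux Q hcoeff hlead hpos
    linarith
  -- E function
  set E : ℝ → ℝ := fun δ => ∑ i, ∏ j ∈ Finset.univ.erase i, (δ - ρ j) with hE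
  -- derivative at 0
  have hderiv0 : Q.derivative.eval 0 = a * E 0 := by
    have hD : Polynomial.derivative (∏ i, (Polynomial.X - Polynomial.C (ρ i))) =
        ∑ i, ∏ j ∈ Finset.univ.erase i, (Polynomial.X - Polynomial.C (ρ j)) := by
      rw [Finset.prod_eq_multiset_prod, Polynomial.derivative_prod]
      rw [Finset.sum_eq_multiset_sum]
      congr 1
      refine Multiset.map_congr rfl fun i _ => ?_
      rw [Polynomial.derivative_sub, Polynomial.derivative_X, Polynomial.derivative_C,
        sub_zero, mul_one, ← Finset.erase_val, ← Finset.prod_eq_multiset_prod]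
    conv_lhs => rw [hfac]
    rw [Polynomial.derivative_mul, Polynomial.derivative_C, zero_mul, zero_add, hD]
    simp [Polynomial.eval_finset_sum, Polynomial.eval_prod, hE]
  -- C is a lower bound
  have hC_le : ∀ t : ℝ, 0 < t → C ≤ Q.eval t / t := by
    intro t ht
    rw [hC]
    apply csInf_le
    · refine ⟨0, fun c hc => ?_⟩
      obtain ⟨u, hu, rfl⟩ := hc
      exact div_nonneg (le_of_lt (eval_pos_aux Q hcoeff hlead hu)) hu.le
    · exact ⟨t, ht, rfl⟩
  -- main estimate for each δ > 0
  have hmain : ∀ δ : ℝ, 0 < δ → C ≤ ((k:ℝ)/((k:ℝ)-1))^(k-1) * (a * E δ) := by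
    intro δ hδ
    have hpos : ∀ i, (0:ℝ) < δ - ρ i := fun i => by have := hρ i; linarith
    set s := ∑ i : Fin k, (δ - ρ i)⁻¹ with hs
    have hspos : 0 < s := by
      refine Finset.sum_pos (fun i _ => inv_pos.2 (hpos i)) ?_
      have : Nonempty (Fin k) := ⟨⟨0, by omega⟩⟩
      exact Finset.univ_nonempty
    set t := (k:ℝ) / (((k:ℝ)-1) * s) with ht
    have htpos : 0 < t := by positivity
    have hts : t * s = (k:ℝ)/((k:ℝ)-1) := by
      rw [ht]; field_simp
    set P := ∏ i, (δ - ρ i) with hP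
    have hPpos : 0 < P := Finset.prod_pos (fun i _ => hpos i)
    have hb1 : ∏ i, (t - ρ i) ≤ ∏ i, ((δ - ρ i) * (1 + t * (δ - ρ i)⁻¹)) := by
      refine Finset.prod_le_prod (fun i _ => by have := hρ i; linarith) (fun i _ => ?_)
      have h := hpos i
      have heq : (δ - ρ i) * (1 + t * (δ - ρ i)⁻¹) = δ - ρ i + t := by
        field_simp
      rw [heq]; linarith
    have hb2 : ∏ i, ((δ - ρ i) * (1 + t * (δ - ρ i)⁻¹)) = P * ∏ i, (1 + t * (δ - ρ i)⁻¹) := by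
      rw [Finset.prod_mul_distrib]
    have hb3 : ∏ i, (1 + t * (δ - ρ i)⁻¹) ≤ ((k:ℝ)/((k:ℝ)-1))^k := by
      have h0 : ∀ i, (0:ℝ) ≤ 1 + t * (δ - ρ i)⁻¹ := fun i => by
        have := hpos i; positivity
      have := amgm_aux (n := k) (by omega) _ h0
      have hsum : ∑ i : Fin k, (1 + t * (δ - ρ i)⁻¹) = (k:ℝ) + t * s := by
        rw [Finset.sum_add_distrib, ← Finset.mul_sum]
        simp [Finset.card_univ]
        exact Or.inl rfl
      rw [hsum] at this
      refine this.trans (le_of_eq ?_)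
      rw [hts]
      congr 1
      field_simp
      ring
    have hPs : P * s = E δ := by
      rw [hs, Finset.mul_sum, hE]
      refine Finset.sum_congr rfl fun i _ => ?_
      rw [hP, ← Finset.mul_prod_erase Finset.univ _ (Finset.mem_univ i)]
      have := hpos i
      field_simp
    have hchain : Q.eval t / t ≤ ((k:ℝ)/((k:ℝ)-1))^(k-1) * (a * E δ) := by
      rw [hQeval]
      have hb : a * ∏ i, (t - ρ i) ≤ a * (P * ((k:ℝ)/((k:ℝ)-1))^k) := by
        have := (hb1.trans (le_of_eq hb2)).trans
          (mul_le_mul_of_nonneg_left hb3 hPpos.le)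
        exact mul_le_mul_of_nonneg_left this hlead.le
      have hdiv : (a * ∏ i, (t - ρ i)) / t ≤ (a * (P * ((k:ℝ)/((k:ℝ)-1))^k)) / t := by
        gcongr
      refine hdiv.trans (le_of_eq ?_)
      rw [← hPs]
      have hpow : ∀ x : ℝ, x ^ k = x ^ (k-1) * x := by
        intro x
        conv_lhs => rw [show k = (k-1)+1 by omega]
        rw [pow_succ]
      rw [hpow]
      rw [ht]
      field_simp
    exact (hC_le t htpos).trans hchain
  -- take the limit δ → 0⁺
  have hcont : Continuous fun δ : ℝ => ((k:ℝ)/((k:ℝ)-1))^(k-1) * (a * E δ) := by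
    apply continuous_const.mul
    apply continuous_const.mul
    rw [hE]
    exact continuous_finset_sum _ fun i _ =>
      continuous_finset_prod _ fun j _ => continuous_id.sub continuous_const
  have hlim : C ≤ ((k:ℝ)/((k:ℝ)-1))^(k-1) * (a * E 0) := by
    have htd : Filter.Tendsto (fun δ : ℝ => ((k:ℝ)/((k:ℝ)-1))^(k-1) * (a * E δ))
        (nhdsWithin (0:ℝ) (Set.Ioi 0)) (nhds (((k:ℝ)/((k:ℝ)-1))^(k-1) * (a * E 0))) :=
      (hcont.tendsto 0).mono_left nhdsWithin_le_nhds
    exact ge_of_tendsto htd (eventually_nhdsWithin_of_forall fun δ hδ => hmain δ hδ)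
  -- conclude
  rw [ge_iff_le, hderiv0]
  have hstep : (((k:ℝ)-1)/k)^(k-1) * C ≤
      (((k:ℝ)-1)/k)^(k-1) * (((k:ℝ)/((k:ℝ)-1))^(k-1) * (a * E 0)) :=
    mul_le_mul_of_nonneg_left hlim (by positivity)
  refine hstep.trans (le_of_eq ?_)
  rw [← mul_assoc, ← mul_pow]
  rw [show ((k:ℝ)-1)/k * ((k:ℝ)/((k:ℝ)-1)) = 1 by field_simp]
  simp
end

section
/- Equality Q'(0) = ((k-1)/k)^{k-1} · inf_{t>0} Q(t)/t for a degree-k polynomial Q with nonnegative coefficients and all real roots holds if and only if Q(t) = b(t+a)^k for some a, b > 0. -/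
open Finset in
lemma my_amgm_exp {n : ℕ} (hn : n ≠ 0) (z : Fin n → ℝ) (hz : ∀ i, 0 < z i) :
    (∏ i, z i) = Real.exp (∑ i, ((n : ℝ))⁻¹ * Real.log (z i)) ^ n := by
  have hn' : ((n : ℝ)) ≠ 0 := Nat.cast_ne_zero.mpr hn
  rw [← Real.exp_nat_mul, Finset.mul_sum]
  have : ∀ i ∈ Finset.univ, (n : ℝ) * ((n : ℝ)⁻¹ * Real.log (z i)) = Real.log (z i) := by
    intro i _; field_simp
  rw [Finset.sum_congr rfl this, Real.exp_sum]
  exact (Finset.prod_congr rfl fun i _ => (Real.exp_log (hz i)).symm)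

open Finset in
lemma my_amgm_le {n : ℕ} (hn : n ≠ 0) (z : Fin n → ℝ) (hz : ∀ i, 0 < z i) :
    ∏ i, z i ≤ ((∑ i, z i) / n) ^ n := by
  have hn' : ((n : ℝ)) ≠ 0 := Nat.cast_ne_zero.mpr hn
  rw [my_amgm_exp hn z hz]
  have key : Real.exp (∑ i, ((n : ℝ))⁻¹ * Real.log (z i)) ≤ (∑ i, z i) / n := by
    have := convexOn_exp.map_sum_le (t := Finset.univ) (w := fun _ : Fin n => ((n : ℝ))⁻¹)
      (p := fun i => Real.log (z i)) (fun i _ => by positivity)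
      (by simp [Finset.sum_const, Finset.card_univ]; field_simp) (fun i _ => Set.mem_univ _)
    simp only [smul_eq_mul] at this
    calc Real.exp (∑ i, ((n:ℝ))⁻¹ * Real.log (z i)) ≤ ∑ i, ((n:ℝ))⁻¹ * Real.exp (Real.log (z i)) := this
      _ = (∑ i, z i) / n := by
          rw [← Finset.mul_sum, div_eq_inv_mul]
          congr 1
          exact Finset.sum_congr rfl fun i _ => Real.exp_log (hz i)
  exact pow_le_pow_left₀ (Real.exp_pos _).le key n


open Finset in
lemma my_amgm_lt {n : ℕ} (hn : n ≠ 0) (z : Fin n → ℝ) (hz : ∀ i, 0 < z i)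
    (hne : ∃ i j, z i ≠ z j) : ∏ i, z i < ((∑ i, z i) / n) ^ n := by
  have hn' : ((n : ℝ)) ≠ 0 := Nat.cast_ne_zero.mpr hn
  rw [my_amgm_exp hn z hz]
  have key : Real.exp (∑ i, ((n : ℝ))⁻¹ * Real.log (z i)) < (∑ i, z i) / n := by
    obtain ⟨i, j, hij⟩ := hne
    have := strictConvexOn_exp.map_sum_lt (t := Finset.univ) (w := fun _ : Fin n => ((n : ℝ))⁻¹)
      (p := fun i => Real.log (z i)) (fun i _ => by positivity)
      (by simp [Finset.sum_const, Finset.card_univ]; field_simp) (fun i _ => Set.mem_univ _)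
      ⟨i, Finset.mem_univ i, j, Finset.mem_univ j,
        fun h => hij (by simpa [Real.exp_log (hz i), Real.exp_log (hz j)] using congrArg Real.exp h)⟩
    simp only [smul_eq_mul] at this
    calc Real.exp (∑ i, ((n:ℝ))⁻¹ * Real.log (z i)) < ∑ i, ((n:ℝ))⁻¹ * Real.exp (Real.log (z i)) := this
      _ = (∑ i, z i) / n := by
          rw [← Finset.mul_sum, div_eq_inv_mul]
          congr 1
          exact Finset.sum_congr rfl fun i _ => Real.exp_log (hz i)
  exact pow_lt_pow_left₀ key (Real.exp_pos _).le hn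

open Polynomial Finset in
lemma my_factor (Q : Polynomial ℝ) (k : ℕ) (hdeg : Q.natDegree = k) (hQne : Q ≠ 0)
    (hroots : ∀ z : ℂ, (Q.map (algebraMap ℝ ℂ)).IsRoot z → z.im = 0) :
    ∃ r : Fin k → ℝ, Q = C Q.leadingCoeff * ∏ i, (X - C (r i)) := by
  classical
  set f := algebraMap ℝ ℂ with hf
  have hinj : Function.Injective f := f.injective
  have hsp : (Q.map f).Splits := IsAlgClosed.splits _
  set μ := (Q.map f).roots with hμ
  have hcardμ : μ.card = k := by
    rw [hμ, (Polynomial.splits_iff_card_roots).mp hsp, Q.natDegree_map_eq_of_injective hinj, hdeg]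
  have hfactC : Q.map f = C (Q.map f).leadingCoeff * (μ.map fun z => X - C z).prod :=
    hsp.eq_prod_roots
  have hlc : (Q.map f).leadingCoeff = f Q.leadingCoeff := Polynomial.leadingCoeff_map f
  set ν : Multiset ℝ := μ.map Complex.re with hν
  have hμν : μ = ν.map Complex.ofReal := by
    rw [hν, Multiset.map_map]
    have : ∀ z ∈ μ, (Complex.ofReal ∘ Complex.re) z = id z := by
      intro z hz
      have him : z.im = 0 := hroots z (Polynomial.isRoot_of_mem_roots hz)
      exact Complex.ext rfl (by simpa using him.symm)
    rw [Multiset.map_congr rfl this, Multiset.map_id]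
  have hfactR : Q = C Q.leadingCoeff * (ν.map fun r => X - C r).prod := by
    apply Polynomial.map_injective f hinj
    rw [hfactC, hlc, hμν, Polynomial.map_mul, Polynomial.map_C, Multiset.map_map]
    congr 1
    rw [← Polynomial.coe_mapRingHom, map_multiset_prod, Multiset.map_map]
    refine congrArg Multiset.prod ?_
    rw [hν]
    simp only [Multiset.map_map]
    exact Multiset.map_congr rfl (fun z hz => by simp [hf, Complex.coe_algebraMap])
  have hcardν : ν.card = k := by rw [hν, Multiset.card_map, hcardμ]
  set l := ν.toList with hl
  have hlen : l.length = k := by rw [hl, Multiset.length_toList, hcardν]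
  refine ⟨fun i => l.get (Fin.cast hlen.symm i), ?_⟩
  conv_lhs => rw [hfactR]
  congr 1
  have h1 : ν = (l : Multiset ℝ) := (Multiset.coe_toList ν).symm
  rw [h1, Multiset.map_coe, Multiset.prod_coe]
  rw [← Fin.prod_univ_fun_getElem l (fun r => X - C r)]
  exact Fintype.prod_equiv (finCongr hlen) _ _ (fun i => rfl)

open Polynomial Finset in
lemma my_deriv_eval (n : ℕ) (L : ℝ) (x : Fin n → ℝ) :
    (Polynomial.derivative (Polynomial.C L * ∏ i, (Polynomial.X + Polynomial.C (x i)))).eval 0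
      = L * ∑ i, ∏ j ∈ Finset.univ.erase i, x j := by
  classical
  rw [Polynomial.derivative_C_mul, Polynomial.eval_mul, Polynomial.eval_C]
  congr 1
  rw [Finset.prod_eq_multiset_prod, Polynomial.derivative_prod]
  rw [show (Polynomial.eval (0:ℝ)) = ⇑(Polynomial.evalRingHom (0:ℝ)) from rfl, map_multiset_sum]
  simp only [Multiset.map_map, Function.comp_apply, Polynomial.derivative_X_add_C, mul_one,
    Polynomial.eval_multiset_prod, Multiset.map_map]
  rw [Finset.sum_eq_multiset_sum]
  apply congrArg Multiset.sum
  apply Multiset.map_congr rfl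
  intro i _
  rw [← Finset.erase_val, ← Finset.prod_eq_multiset_prod]
  simp


open Polynomial Finset in
/-- Equality Q'(0) = ((k-1)/k)^{k-1} · inf_{t>0} Q(t)/t holds iff
Q(t) = b(t+a)^k for some a, b > 0. -/
theorem stmt_1 (Q : Polynomial ℝ) (k : ℕ) (hk : 2 ≤ k) (hdeg : Q.natDegree = k)
    (hlead : 0 < Q.leadingCoeff)
    (hcoeff : ∀ i, 0 ≤ Q.coeff i)
    (hroots : ∀ z : ℂ, (Q.map (algebraMap ℝ ℂ)).IsRoot z → z.im = 0)
    (hpos : 0 < sInf {c : ℝ | ∃ t : ℝ, 0 < t ∧ c = Q.eval t / t}) :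
    Q.derivative.eval 0
        = (((k : ℝ) - 1) / k) ^ (k - 1) * sInf {c : ℝ | ∃ t : ℝ, 0 < t ∧ c = Q.eval t / t}
      ↔ ∃ a b : ℝ, 0 < a ∧ 0 < b ∧ Q = Polynomial.C b * (Polynomial.X + Polynomial.C a) ^ k := by
  classical
  obtain ⟨e, rfl⟩ : ∃ e, k = e + 1 := ⟨k - 1, (Nat.succ_pred_eq_of_pos (by omega)).symm⟩
  simp only [Nat.add_sub_cancel] at *
  have he1 : 1 ≤ e := by omega
  have hepos : (0:ℝ) < e := by exact_mod_cast Nat.pos_of_ne_zero (by omega)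
  have hKpos : (0:ℝ) < ((e:ℝ) + 1) := by positivity
  have hKcast : ((e + 1 : ℕ) : ℝ) = (e : ℝ) + 1 := by push_cast; ring
  have hK1 : ((e + 1 : ℕ) : ℝ) - 1 = (e : ℝ) := by rw [hKcast]; ring
  set m := sInf {c : ℝ | ∃ t : ℝ, 0 < t ∧ c = Q.eval t / t} with hm
  have hevalnn : ∀ t : ℝ, 0 ≤ t → 0 ≤ Q.eval t := by
    intro t ht
    rw [Polynomial.eval_eq_sum_range]
    exact Finset.sum_nonneg fun i _ => mul_nonneg (hcoeff i) (pow_nonneg ht i)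
  have hevalpos : ∀ t : ℝ, 0 < t → 0 < Q.eval t := by
    intro t ht
    rw [Polynomial.eval_eq_sum_range]
    apply Finset.sum_pos' (fun i _ => mul_nonneg (hcoeff i) (pow_nonneg ht.le i))
    refine ⟨e + 1, by simp [hdeg], ?_⟩
    have hck : Q.coeff (e+1) = Q.leadingCoeff := by rw [← hdeg]; rfl
    rw [hck]
    exact mul_pos hlead (pow_pos ht _)
  have hbdd : BddBelow {c : ℝ | ∃ t : ℝ, 0 < t ∧ c = Q.eval t / t} := by
    refine ⟨0, ?_⟩
    rintro c ⟨t, ht, rfl⟩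
    exact div_nonneg (hevalnn t ht.le) ht.le
  have hnem : Set.Nonempty {c : ℝ | ∃ t : ℝ, 0 < t ∧ c = Q.eval t / t} :=
    ⟨Q.eval 1 / 1, 1, one_pos, rfl⟩
  constructor
  · intro heq
    by_cases hQ0 : Q.coeff 0 = 0
    · -- degenerate case: contradiction
      exfalso
      have h1le : ∀ t : ℝ, 0 < t → Q.coeff 1 ≤ Q.eval t / t := by
        intro t ht
        rw [le_div_iff₀ ht, Polynomial.eval_eq_sum_range]
        calc Q.coeff 1 * t = Q.coeff 1 * t ^ 1 := by ring
          _ ≤ ∑ i ∈ Finset.range (Q.natDegree + 1), Q.coeff i * t ^ i :=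
            Finset.single_le_sum (f := fun i => Q.coeff i * t ^ i)
              (fun i _ => mul_nonneg (hcoeff i) (pow_nonneg ht.le i))
              (by simp [hdeg])
      have hlow : Q.coeff 1 ≤ m := le_csInf hnem (by rintro c ⟨t, ht, rfl⟩; exact h1le t ht)
      have hco : Q.derivative.eval 0 = Q.coeff 1 := by
        rw [← Polynomial.coeff_zero_eq_eval_zero, Polynomial.coeff_derivative]
        norm_num
      have hub : m ≤ Q.coeff 1 := by
        have hd : HasDerivAt (fun y : ℝ => Q.eval y) (Q.derivative.eval 0) 0 := Q.hasDerivAt 0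
        rw [hasDerivAt_iff_tendsto_slope] at hd
        have hd' : Filter.Tendsto (slope (fun y : ℝ => Q.eval y) 0) (nhdsWithin 0 (Set.Ioi 0))
            (nhds (Q.coeff 1)) := by
          rw [← hco]
          exact hd.mono_left (nhdsWithin_mono 0 (fun y hy => ne_of_gt hy))
        refine ge_of_tendsto hd' ?_
        filter_upwards [self_mem_nhdsWithin] with t ht
        have hsl : slope (fun y : ℝ => Q.eval y) 0 t = Q.eval t / t := by
          rw [slope_def_field]
          rw [← Polynomial.coeff_zero_eq_eval_zero, hQ0]
          ring_nf
        rw [hsl]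
        exact csInf_le hbdd ⟨t, ht, rfl⟩
      have hmeq : m = Q.coeff 1 := le_antisymm hub hlow
      have hclt : ((((e + 1 : ℕ) : ℝ) - 1) / ((e + 1 : ℕ) : ℝ)) ^ e < 1 := by
        rw [hK1, hKcast]
        refine pow_lt_one₀ (by positivity) ?_ (by omega)
        rw [div_lt_one hKpos]
        linarith
      nlinarith [mul_lt_of_lt_one_left hpos hclt]
    · -- main case
      obtain ⟨r, hfact⟩ := my_factor Q (e+1) hdeg (Polynomial.leadingCoeff_ne_zero.mp hlead.ne') hroots
      set L := Q.leadingCoeff with hL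
      clear_value L
      set x : Fin (e+1) → ℝ := fun i => - r i with hx
      have hfact' : Q = C L * ∏ i, (X + C (x i)) := by
        rw [hfact]
        congr 1
        exact Finset.prod_congr rfl fun i _ => by rw [hx]; simp [sub_eq_add_neg]
      have heval : ∀ t : ℝ, Q.eval t = L * ∏ i, (t + x i) := by
        intro t
        rw [hfact']
        simp [Polynomial.eval_prod]
      have hxnn : ∀ i, 0 ≤ x i := by
        intro i
        by_contra h
        push_neg at h
        have ht : (0:ℝ) < -(x i) := by linarith
        have hp := hevalpos _ ht
        rw [heval, Finset.prod_eq_zero (Finset.mem_univ i)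
          (by ring : -(x i) + x i = 0), mul_zero] at hp
        exact lt_irrefl 0 hp
      have hx0 : ∀ i, 0 < x i := by
        have h0 : Q.eval 0 ≠ 0 := by rwa [← Polynomial.coeff_zero_eq_eval_zero]
        rw [heval 0] at h0
        intro i
        rcases (hxnn i).lt_or_eq with h | h
        · exact h
        · refine absurd ?_ h0
          rw [mul_eq_zero]
          right
          exact Finset.prod_eq_zero (Finset.mem_univ i) (by rw [← h]; ring)
      have hPpos : 0 < ∏ i, x i := Finset.prod_pos fun i _ => hx0 i
      set P : ℝ := ∏ i, x i with hP
      set S : ℝ := ∑ i, (x i)⁻¹ with hS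
      have hSpos : 0 < S := Finset.sum_pos (fun i _ => by have := hx0 i; positivity)
        Finset.univ_nonempty
      have hQ'0 : Q.derivative.eval 0 = L * P * S := by
        rw [hfact', my_deriv_eval]
        have hterm : ∀ i ∈ Finset.univ, (∏ j ∈ Finset.univ.erase i, x j) = P * (x i)⁻¹ := by
          intro i _
          have h1 := Finset.prod_erase_mul Finset.univ x (Finset.mem_univ i)
          rw [hP, ← h1, mul_inv_cancel_right₀ (hx0 i).ne']
        rw [Finset.sum_congr rfl hterm, ← Finset.mul_sum, ← hS]
        ring
      set t0 : ℝ := ((e:ℝ) + 1) / ((e:ℝ) * S) with ht0def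
      have ht0 : 0 < t0 := div_pos hKpos (mul_pos hepos hSpos)
      set z : Fin (e+1) → ℝ := fun i => 1 + t0 * (x i)⁻¹ with hz
      have hzpos : ∀ i, 0 < z i := by
        intro i
        have h1 := hx0 i
        simp only [hz]
        positivity
      have hfac2 : ∀ i, t0 + x i = x i * z i := by
        intro i
        simp only [hz]
        field_simp [(hx0 i).ne']
        ring
      have hzsum : (∑ i, z i) / ((e:ℝ)+1) = ((e:ℝ)+1)/(e:ℝ) := by
        simp only [hz]
        rw [Finset.sum_add_distrib, Finset.sum_const, Finset.card_univ, Fintype.card_fin,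
          ← Finset.mul_sum, ← hS, ht0def]
        field_simp
        ring
      have hevalt0 : Q.eval t0 = L * P * ∏ i, z i := by
        rw [heval t0, Finset.prod_congr rfl (fun i _ => hfac2 i), Finset.prod_mul_distrib, ← hP]
        ring
      have hamgm : ∏ i, z i ≤ (((e:ℝ)+1)/(e:ℝ))^(e+1) := by
        have h1 := my_amgm_le (n := e+1) (by omega) z hzpos
        rw [hKcast, hzsum] at h1
        exact h1
      have hBe : (L * P * (((e:ℝ)+1)/(e:ℝ))^(e+1)) / t0 = (L*P*S) * (((e:ℝ)+1)/(e:ℝ))^e := by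
        rw [ht0def, pow_succ]
        field_simp
      have hkey : Q.eval t0 / t0 ≤ (L*P*S) * (((e:ℝ)+1)/(e:ℝ))^e := by
        rw [← hBe, hevalt0]
        exact (div_le_div_iff_of_pos_right ht0).mpr
          (mul_le_mul_of_nonneg_left hamgm (mul_pos hlead hPpos).le)
      have heq' : Q.derivative.eval 0 = ((e:ℝ)/((e:ℝ)+1))^e * m := by
        rw [heq, hK1, hKcast]
      have hcinv : ((e:ℝ)/((e:ℝ)+1))^e * (((e:ℝ)+1)/(e:ℝ))^e = 1 := by
        have h1 : (e:ℝ)/((e:ℝ)+1) * (((e:ℝ)+1)/(e:ℝ)) = 1 := by field_simp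
        rw [← mul_pow, h1, one_pow]
      have hmB : m = (L*P*S) * (((e:ℝ)+1)/(e:ℝ))^e := by
        have h1 : ((e:ℝ)/((e:ℝ)+1))^e * m
            = ((e:ℝ)/((e:ℝ)+1))^e * ((L*P*S) * (((e:ℝ)+1)/(e:ℝ))^e) := by
          rw [← heq', hQ'0]
          calc L*P*S = L*P*S * (((e:ℝ)/((e:ℝ)+1))^e * (((e:ℝ)+1)/(e:ℝ))^e) := by
                rw [hcinv, mul_one]
            _ = _ := by ring
        exact mul_left_cancel₀ (by positivity) h1
      have hmle : m ≤ Q.eval t0 / t0 := csInf_le hbdd ⟨t0, ht0, rfl⟩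
      have heqt : Q.eval t0 / t0 = m := le_antisymm (by rw [hmB]; exact hkey) hmle
      have hprodz : ∏ i, z i = (((e:ℝ)+1)/(e:ℝ))^(e+1) := by
        have h1 : (L*P*∏ i, z i)/t0 = (L*P*(((e:ℝ)+1)/(e:ℝ))^(e+1))/t0 := by
          rw [← hevalt0, hBe, heqt]
          exact hmB
        have h2 : L*P*(∏ i, z i) = L*P*((((e:ℝ)+1)/(e:ℝ))^(e+1)) := by
          have h3 := congrArg (fun y => y * t0) h1
          simpa [div_mul_cancel₀, ht0.ne'] using h3
        exact mul_left_cancel₀ (mul_pos hlead hPpos).ne' h2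
      have hallz : ∀ i j, z i = z j := by
        by_contra hcon
        push_neg at hcon
        obtain ⟨i, j, hij⟩ := hcon
        have hlt := my_amgm_lt (n := e+1) (by omega) z hzpos ⟨i, j, hij⟩
        rw [hKcast, hzsum] at hlt
        exact absurd hprodz (ne_of_lt hlt)
      have hxall : ∀ i, x i = x ⟨0, by omega⟩ := by
        intro i
        have h1 := hallz i ⟨0, by omega⟩
        simp only [hz] at h1
        have h2 : (x i)⁻¹ = (x ⟨0, by omega⟩)⁻¹ :=
          mul_left_cancel₀ ht0.ne' (by linarith)
        exact inv_injective h2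
      refine ⟨x ⟨0, by omega⟩, L, hx0 _, hlead, ?_⟩
      conv_lhs => rw [hfact']
      congr 1
      have hcn : ∀ i ∈ Finset.univ, (X + C (x i) : Polynomial ℝ)
          = X + C (x (⟨0, by omega⟩ : Fin (e+1))) := fun i _ => by rw [hxall i]
      rw [Finset.prod_congr rfl hcn, Finset.prod_const, Finset.card_univ, Fintype.card_fin]
  · rintro ⟨a, b, ha, hb, hQ⟩
    have i0 : Fin (e+1) := ⟨0, by omega⟩
    have hevalQ : ∀ t : ℝ, Q.eval t = b * (t+a)^(e+1) := by
      intro t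
      rw [hQ]
      simp
    have hder : Q.derivative.eval 0 = b * (((e:ℝ)+1) * a^e) := by
      rw [hQ, Polynomial.derivative_C_mul, Polynomial.derivative_pow,
        Polynomial.derivative_X_add_C]
      simp
    set t0 : ℝ := a / (e:ℝ) with ht0def
    have ht0 : 0 < t0 := div_pos ha hepos
    have hmem : Q.eval t0 / t0 = b * a^e * ((e:ℝ)+1)^(e+1) / (e:ℝ)^e := by
      rw [hevalQ t0, ht0def]
      have h1 : a/(e:ℝ) + a = a*((e:ℝ)+1)/(e:ℝ) := by field_simp; ring
      rw [h1, div_pow, mul_pow]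
      field_simp
      ring
    have hlb : ∀ w ∈ {c : ℝ | ∃ t : ℝ, 0 < t ∧ c = Q.eval t / t},
        b * a^e * ((e:ℝ)+1)^(e+1) / (e:ℝ)^e ≤ w := by
      rintro w ⟨t, ht, rfl⟩
      rw [hevalQ]
      set zz : Fin (e+1) → ℝ := Fin.cons t (fun _ => a/(e:ℝ)) with hzz
      have hzzpos : ∀ i, 0 < zz i := by
        intro i
        simp only [hzz]
        refine Fin.cases ?_ ?_ i
        · simpa using ht
        · intro j
          simpa using div_pos ha hepos
      have hsum : ∑ i, zz i = t + a := by
        simp only [hzz]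
        rw [Fin.sum_cons, Finset.sum_const, Finset.card_univ, Fintype.card_fin, nsmul_eq_mul]
        field_simp
      have hprod : ∏ i, zz i = t * (a/(e:ℝ))^e := by
        simp only [hzz]
        rw [Fin.prod_cons, Finset.prod_const, Finset.card_univ, Fintype.card_fin]
      have hag := my_amgm_le (n := e+1) (by omega) zz hzzpos
      rw [hsum, hprod, hKcast] at hag
      have hcross : t * a^e * ((e:ℝ)+1)^(e+1) ≤ (t+a)^(e+1) * (e:ℝ)^e := by
        rw [div_pow, div_pow, ← mul_div_assoc] at hag
        exact (div_le_div_iff₀ (pow_pos hepos e) (pow_pos hKpos (e+1))).mp hag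
      rw [div_le_div_iff₀ (by positivity) ht]
      calc b * a^e * ((e:ℝ)+1)^(e+1) * t = b * (t * a^e * ((e:ℝ)+1)^(e+1)) := by ring
        _ ≤ b * ((t+a)^(e+1) * (e:ℝ)^e) := mul_le_mul_of_nonneg_left hcross hb.le
        _ = b * (t+a)^(e+1) * (e:ℝ)^e := by ring
    have hsinf : m = b * a^e * ((e:ℝ)+1)^(e+1) / (e:ℝ)^e := by
      rw [hm]
      exact le_antisymm (hmem ▸ csInf_le hbdd ⟨t0, ht0, rfl⟩) (le_csInf hnem hlb)
    rw [hder, hsinf, hK1, hKcast]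
    rw [div_pow]
    field_simp
    ring
end

section
/- If f : [0,∞) → [0,∞) is differentiable at 0 with f(0) ≥ 0, and f^{1/k} is concave on [0,∞), then f'(0) ≥ ((k-1)/k)^{k-1} · inf_{t>0} f(t)/t. -/
open Set Filter Topology

/-- If a function vanishing at 0 is eventually nonnegative on the right of 0 and has a
one-sided derivative there, the derivative is nonnegative. -/
lemma aux_slope_nonneg {h : ℝ → ℝ} {d : ℝ}
    (hd : HasDerivWithinAt h d (Set.Ici 0) 0) (h0 : h 0 = 0)
    (hpos : ∀ᶠ s in 𝓝[>] (0:ℝ), 0 ≤ h s) : 0 ≤ d := by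
  rw [hasDerivWithinAt_iff_tendsto_slope, Set.Ici_sdiff_left] at hd
  refine ge_of_tendsto hd ?_
  filter_upwards [hpos, self_mem_nhdsWithin] with s hs hs'
  have hs0 : (0:ℝ) < s := hs'
  rw [slope_def_field, h0]
  have : (0:ℝ) ≤ h s / s := div_nonneg hs hs0.le
  simpa using this

/-- if f : [0,∞) → [0,∞) is differentiable at 0 and f^{1/k} is
concave on [0,∞) (k ≥ 2), then f'(0) ≥ ((k-1)/k)^{k-1} · inf_{t>0} f(t)/t. -/
theorem stmt_4 (k : ℕ) (hk : 2 ≤ k) (f : ℝ → ℝ) (f' : ℝ)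
    (hf : ∀ t, 0 ≤ t → 0 ≤ f t)
    (hderiv : HasDerivWithinAt f f' (Set.Ici 0) 0)
    (hconc : ConcaveOn ℝ (Set.Ici 0) (fun t => f t ^ ((1 : ℝ) / k))) :
    f' ≥ (((k : ℝ) - 1) / k) ^ (k - 1) * sInf {c : ℝ | ∃ t : ℝ, 0 < t ∧ c = f t / t} := by
  have hk0 : k ≠ 0 := by omega
  have hkR : (2:ℝ) ≤ (k:ℝ) := by exact_mod_cast hk
  have hkpos : (0:ℝ) < (k:ℝ) := by linarith
  have hk1 : (0:ℝ) < (k:ℝ) - 1 := by linarith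
  set g : ℝ → ℝ := fun t => f t ^ ((1:ℝ)/k) with hg
  set a := g 0 with ha
  have ha0 : 0 ≤ a := Real.rpow_nonneg (hf 0 le_rfl) _
  have hfg : ∀ s, 0 ≤ s → f s = g s ^ k := by
    intro s hs
    rw [hg]
    simp only
    rw [one_div, Real.rpow_inv_natCast_pow (hf s hs) hk0]
  set S := {c : ℝ | ∃ t : ℝ, 0 < t ∧ c = f t / t} with hS
  have hSne : S.Nonempty := ⟨f 1 / 1, 1, one_pos, rfl⟩
  have hSbdd : BddBelow S := by
    refine ⟨0, fun c hc => ?_⟩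
    obtain ⟨t, ht, rfl⟩ := hc
    exact div_nonneg (hf t ht.le) ht.le
  set m := sInf S with hm
  have hm0 : 0 ≤ m := by
    refine le_csInf hSne (fun c hc => ?_)
    obtain ⟨t, ht, rfl⟩ := hc
    exact div_nonneg (hf t ht.le) ht.le
  have hmf : ∀ t : ℝ, 0 < t → m * t ≤ f t := by
    intro t ht
    have h1 : m ≤ f t / t := csInf_le hSbdd ⟨t, ht, rfl⟩
    calc m * t ≤ (f t / t) * t := by nlinarith
      _ = f t := div_mul_cancel₀ _ ht.ne'
  -- key estimate: for every t > 0
  have key : ∀ t : ℝ, 0 < t →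
      (k:ℝ) * a ^ (k-1) * (((m*t) ^ ((1:ℝ)/k) - a) / t) ≤ f' := by
    intro t ht
    set d : ℝ := ((m*t) ^ ((1:ℝ)/k) - a) / t with hd
    have l1 : HasDerivAt (fun s : ℝ => a + s * d) d 0 := by
      simpa using ((hasDerivAt_id (0:ℝ)).mul_const d).const_add a
    have l2 : HasDerivAt (fun s : ℝ => (a + s * d) ^ k)
        ((k:ℝ) * (a + 0 * d) ^ (k-1) * d) 0 := l1.pow k
    have l3 : HasDerivWithinAt (fun s => f s - (a + s * d) ^ k)
        (f' - (k:ℝ) * (a + 0*d) ^ (k-1) * d) (Set.Ici 0) 0 :=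
      hderiv.sub l2.hasDerivWithinAt
    have h0 : f 0 - (a + 0 * d) ^ k = 0 := by
      rw [hfg 0 le_rfl]
      simp [ha]
    have hnn : 0 ≤ f' - (k:ℝ) * (a + 0*d)^(k-1) * d := by
      refine aux_slope_nonneg l3 h0 ?_
      have hIoo : Set.Ioo (0:ℝ) t ∈ 𝓝[>] (0:ℝ) := Ioo_mem_nhdsGT_of_mem ⟨le_refl 0, ht⟩
      filter_upwards [hIoo] with s hs
      obtain ⟨hs0, hst⟩ := hs
      have hβ : 0 ≤ s / t := by positivity
      have hβ1 : s / t ≤ 1 := by rw [div_le_one ht]; exact hst.le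
      have hα : 0 ≤ 1 - s/t := by linarith
      have hcon := hconc.2 (Set.self_mem_Ici) (Set.mem_Ici.mpr ht.le) hα hβ (by ring)
      have hxy : (1 - s/t) • (0:ℝ) + (s/t) • t = s := by
        simp only [smul_eq_mul, mul_zero, zero_add]
        field_simp
      rw [hxy] at hcon
      have hmt0 : (0:ℝ) ≤ m * t := by positivity
      have hgt : (m*t) ^ ((1:ℝ)/k) ≤ g t :=
        Real.rpow_le_rpow hmt0 (hmf t ht) (by positivity)
      have hrw : a + s * d = (1 - s/t) * a + (s/t) * ((m*t)^((1:ℝ)/k)) := by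
        rw [hd]; field_simp; ring
      have hbase : a + s * d ≤ g s := by
        rw [hrw]
        have h2 : (s/t) * ((m*t)^((1:ℝ)/k)) ≤ (s/t) * g t := by nlinarith
        have h3 : (1 - s/t) * a + (s/t) * g t ≤ g s := by
          simpa [smul_eq_mul] using hcon
        linarith
      have hbase0 : 0 ≤ a + s * d := by
        rw [hrw]
        have h1 : 0 ≤ (m*t)^((1:ℝ)/k) := Real.rpow_nonneg hmt0 _
        positivity
      have hpow : (a + s*d)^k ≤ g s ^ k := pow_le_pow_left₀ hbase0 hbase k
      rw [← hfg s hs0.le] at hpow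
      linarith
    have : (k:ℝ) * (a + 0*d)^(k-1) * d ≤ f' := by linarith
    simpa using this
  have hpowk : ∀ x : ℝ, x ^ k = x ^ (k-1) * x := by
    intro x
    conv_lhs => rw [show k = (k-1) + 1 by omega, pow_succ]
  -- now split on cases
  show f' ≥ (((k : ℝ) - 1) / k) ^ (k - 1) * m
  rcases eq_or_lt_of_le hm0 with hm' | hm'
  · -- m = 0 : show f' ≥ 0
    rw [ge_iff_le, ← hm', mul_zero]
    by_contra hcon
    push_neg at hcon
    set K : ℝ := (k:ℝ) * a^(k-1) * a with hK
    have hK0 : 0 ≤ K := by positivity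
    set t : ℝ := (K + 1) / (-f') with htdef
    have ht : 0 < t := by
      apply div_pos (by linarith) (by linarith)
    have hkey := key t ht
    rw [← hm'] at hkey
    have hz : ((0:ℝ) * t) ^ ((1:ℝ)/k) = 0 := by
      rw [zero_mul, Real.zero_rpow (by positivity)]
    rw [hz] at hkey
    have hkey' : -K / t ≤ f' := by
      rw [hK]
      have : (k:ℝ) * a ^ (k-1) * ((0 - a) / t) = -((k:ℝ) * a^(k-1) * a) / t := by ring
      linarith [hkey, this ▸ hkey]
    have hf'ne : -f' ≠ 0 := by linarith
    have htval : t * (-f') = K + 1 := div_mul_cancel₀ _ hf'ne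
    have h4 : -K ≤ f' * t := (div_le_iff₀ ht).mp hkey'
    have h5 : f' * t = -(K+1) := by linear_combination -htval
    linarith
  · -- m > 0
    rcases eq_or_lt_of_le ha0 with ha' | ha'
    · -- a = 0, hence f 0 = 0 ; then f' ≥ m directly
      have hf0 : f 0 = 0 := by
        rw [hfg 0 le_rfl, ← ha, ← ha', zero_pow hk0]
      have l : HasDerivWithinAt (fun s => f s - m * s) (f' - m) (Set.Ici 0) 0 := by
        have : HasDerivAt (fun s : ℝ => m * s) m 0 := by
          simpa using (hasDerivAt_id (0:ℝ)).const_mul m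
        exact hderiv.sub this.hasDerivWithinAt
      have h1 : 0 ≤ f' - m := by
        refine aux_slope_nonneg l (by simp [hf0]) ?_
        filter_upwards [self_mem_nhdsWithin] with s hs
        have hs0 : (0:ℝ) < s := hs
        have := hmf s hs0
        linarith
      have hc1 : (((k:ℝ) - 1) / k) ^ (k-1) ≤ 1 := by
        apply pow_le_one₀ (by positivity)
        rw [div_le_one hkpos]; linarith
      have : (((k:ℝ) - 1) / k) ^ (k-1) * m ≤ 1 * m :=
        mul_le_mul_of_nonneg_right hc1 hm0
      rw [ge_iff_le]
      linarith
    · -- a > 0, m > 0 : choose optimal t₀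
      set t0 : ℝ := ((k:ℝ)*a)^k / (((k:ℝ)-1)^k * m) with ht0def
      have ht0 : 0 < t0 := by positivity
      have hmt0 : m * t0 = ((k:ℝ)*a/((k:ℝ)-1))^k := by
        rw [ht0def, div_pow]
        field_simp
      have hroot : (m*t0)^((1:ℝ)/k) = (k:ℝ)*a/((k:ℝ)-1) := by
        rw [hmt0, one_div, Real.pow_rpow_inv_natCast (by positivity) hk0]
      have hkey := key t0 ht0
      rw [hroot] at hkey
      have heq : (((k:ℝ) - 1) / k) ^ (k-1) * m
          = (k:ℝ) * a ^ (k-1) * (((k:ℝ)*a/((k:ℝ)-1) - a) / t0) := by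
        have haz : a ≠ 0 := ne_of_gt ha'
        have hmz : m ≠ 0 := ne_of_gt hm'
        have hkz : (k:ℝ) ≠ 0 := ne_of_gt hkpos
        have hk1z : (k:ℝ) - 1 ≠ 0 := ne_of_gt hk1
        rw [ht0def, div_pow, hpowk ((k:ℝ)*a), hpowk ((k:ℝ)-1), mul_pow]
        field_simp
        ring
      rw [ge_iff_le, heq]
      exact hkey
end

section
/- A homogeneous polynomial p of degree n in m variables is H-stable (nonvanishing whenever all variables have positive real part) if and only if p(X) ≠ 0 for all X with all coordinates positive real, and for all X, Y with all coordinates positive real, every root of the univariate polynomial t ↦ p(tX − Y) is a positive real number. -/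
open MvPolynomial

/-- Evaluating a homogeneous polynomial at a scaled point. -/
lemma eval_scale {m n : ℕ} {p : MvPolynomial (Fin m) ℂ} (hp : p.IsHomogeneous n)
    (c : ℂ) (z : Fin m → ℂ) :
    MvPolynomial.eval (fun i => c * z i) p = c ^ n * MvPolynomial.eval z p := by
  rw [MvPolynomial.eval_eq, MvPolynomial.eval_eq, Finset.mul_sum]
  refine Finset.sum_congr rfl fun d hd => ?_
  have h1 : ∑ i ∈ d.support, d i = n := by
    have h := hp (MvPolynomial.mem_support_iff.mp hd)
    rw [Finsupp.weight_apply] at h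
    simpa [Finsupp.sum] using h
  simp_rw [mul_pow]
  rw [Finset.prod_mul_distrib, Finset.prod_pow_eq_pow_sum, h1]
  ring

/-- a homogeneous polynomial is H-stable iff it is nonvanishing on
positive real vectors and all roots of t ↦ p(tX − Y) for X, Y > 0 are positive reals. -/
theorem stmt_6 (m n : ℕ) (p : MvPolynomial (Fin m) ℂ) (hp : p.IsHomogeneous n) :
    (∀ z : Fin m → ℂ, (∀ i, 0 < (z i).re) → MvPolynomial.eval z p ≠ 0)
      ↔ ((∀ X : Fin m → ℝ, (∀ i, 0 < X i) →
            MvPolynomial.eval (fun i => (X i : ℂ)) p ≠ 0)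
         ∧ ∀ X Y : Fin m → ℝ, (∀ i, 0 < X i) → (∀ i, 0 < Y i) →
            ∀ t : ℂ, MvPolynomial.eval (fun i => t * (X i : ℂ) - (Y i : ℂ)) p = 0 →
              t.im = 0 ∧ 0 < t.re) := by
  constructor
  · intro H
    constructor
    · intro X hX
      exact H _ (fun i => by simpa using hX i)
    · intro X Y hX hY t ht
      by_contra hcon
      -- find a multiplier λ with Re λ < 0 and Re (λ t) ≥ 0
      obtain ⟨l, hl1, hl2⟩ : ∃ l : ℂ, l.re < 0 ∧ 0 ≤ (l * t).re := by
        by_cases him : t.im = 0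
        · refine ⟨-1, by norm_num, ?_⟩
          have hre : t.re ≤ 0 := by
            by_contra h
            exact hcon ⟨him, lt_of_not_ge h⟩
          simp [Complex.mul_re, him]
          linarith
        · refine ⟨Complex.mk (-(t.im ^ 2 / (|t.re| + 1))) (-t.im), ?_, ?_⟩
          · have : 0 < t.im ^ 2 / (|t.re| + 1) := by positivity
            simpa using this
          · simp only [Complex.mul_re]
            have h1 : t.im ^ 2 / (|t.re| + 1) * |t.re| ≤ t.im ^ 2 := by
              rw [div_mul_eq_mul_div, div_le_iff₀ (by positivity)]
              nlinarith [abs_nonneg t.re, sq_nonneg t.im]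
            have h2 : -(t.im ^ 2 / (|t.re| + 1)) * t.re ≥ -(t.im ^ 2 / (|t.re| + 1) * |t.re|) := by
              have := le_abs_self t.re
              have hd : 0 ≤ t.im ^ 2 / (|t.re| + 1) := by positivity
              nlinarith
            nlinarith
      have key : MvPolynomial.eval (fun i => l * (t * (X i : ℂ) - (Y i : ℂ))) p ≠ 0 := by
        apply H
        intro i
        have : (l * (t * (X i : ℂ) - (Y i : ℂ))).re = (l * t).re * X i - l.re * Y i := by
          simp [Complex.mul_re, Complex.sub_re, Complex.sub_im]
          ring
        rw [this]
        have h1 : 0 ≤ (l * t).re * X i := mul_nonneg hl2 (hX i).le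
        have h2 : l.re * Y i < 0 := mul_neg_of_neg_of_pos hl1 (hY i)
        linarith
      apply key
      rw [eval_scale hp l (fun i => t * (X i : ℂ) - (Y i : ℂ)), ht, mul_zero]
  · rintro ⟨-, hB⟩ z hz h0
    -- rotate z slightly so all imaginary parts become positive
    set f : Fin m → ℝ := fun i => (z i).re / (|(z i).im| + 1) with hf
    set S : Finset ℝ := insert 1 (Finset.image f Finset.univ) with hS
    have hSne : S.Nonempty := ⟨1, Finset.mem_insert_self _ _⟩
    set ε : ℝ := S.min' hSne / 2 with hε
    have hεpos : 0 < ε := by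
      have : 0 < S.min' hSne := by
        apply lt_of_lt_of_le _ (le_refl _)
        rw [Finset.lt_min'_iff]
        intro y hy
        rcases Finset.mem_insert.mp hy with rfl | hy
        · norm_num
        · obtain ⟨i, -, rfl⟩ := Finset.mem_image.mp hy
          exact div_pos (hz i) (by positivity)
      positivity
    have hεlt : ∀ i, ε * (|(z i).im| + 1) < (z i).re := by
      intro i
      have hmin : S.min' hSne ≤ f i :=
        Finset.min'_le _ _ (Finset.mem_insert_of_mem (Finset.mem_image_of_mem f (Finset.mem_univ i)))
      have : ε < f i := by
        have : 0 < S.min' hSne := by linarith [hεpos, hε ▸ hεpos]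
        calc ε = S.min' hSne / 2 := hε
          _ < S.min' hSne := by linarith
          _ ≤ f i := hmin
      calc ε * (|(z i).im| + 1) < f i * (|(z i).im| + 1) := by
            apply mul_lt_mul_of_pos_right this (by positivity)
        _ = (z i).re := by
            rw [hf]; field_simp
    set u : ℂ := Complex.mk ε 1 with hu
    set w : Fin m → ℂ := fun i => u * z i with hw
    have hwim : ∀ i, 0 < (w i).im := by
      intro i
      have : (w i).im = ε * (z i).im + (z i).re := by
        simp [hw, hu, Complex.mul_im]
      rw [this]
      have h1 := hεlt i
      have h2 : ε * (z i).im ≥ -(ε * |(z i).im|) := by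
        have := neg_abs_le (z i).im
        nlinarith [hεpos]
      nlinarith [hεpos]
    -- now write w i = t * X i - Y i with X, Y > 0 and t = T + i
    set X : Fin m → ℝ := fun i => (w i).im with hX
    have hXpos : ∀ i, 0 < X i := hwim
    set T : ℝ := 1 + ∑ i, |(w i).re| / X i with hT
    set Y : Fin m → ℝ := fun i => T * X i - (w i).re with hY
    have hYpos : ∀ i, 0 < Y i := by
      intro i
      have hterm : |(w i).re| / X i ≤ ∑ j, |(w j).re| / X j :=
        Finset.single_le_sum (f := fun j => |(w j).re| / X j)
          (fun j _ => div_nonneg (abs_nonneg _) (hXpos j).le) (Finset.mem_univ i)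
      have h1 : (w i).re ≤ |(w i).re| := le_abs_self _
      have h2 : (|(w i).re| / X i) * X i = |(w i).re| :=
        div_mul_cancel₀ _ (hXpos i).ne'
      have : T * X i > |(w i).re| := by
        rw [← h2, hT]
        have := hXpos i
        nlinarith
      simp only [hY]
      linarith
    set t : ℂ := Complex.mk T 1 with ht
    have hfun : (fun i => t * (X i : ℂ) - (Y i : ℂ)) = w := by
      funext i
      apply Complex.ext
      · simp [ht, hY, Complex.mul_re]
      · simp [ht, hX, Complex.mul_im]
    have heval : MvPolynomial.eval (fun i => t * (X i : ℂ) - (Y i : ℂ)) p = 0 := by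
      rw [hfun, hw]
      rw [eval_scale hp u z, h0, mul_zero]
    have := (hB X Y hXpos hYpos t heval).1
    simp [ht] at this
end

section
/- If p is a homogeneous H-stable polynomial of degree n in m variables, X, Y ∈ ℝ^m, and X + Y has all coordinates strictly positive, then every complex root of the univariate polynomial t ↦ p(tX + Y) is real. -/
lemma eval_mul_pow_aux {m n : ℕ} (p : MvPolynomial (Fin m) ℂ) (hp : p.IsHomogeneous n)
    (c : ℂ) (z : Fin m → ℂ) :
    MvPolynomial.eval (fun i => c * z i) p = c ^ n * MvPolynomial.eval z p := by
  rw [MvPolynomial.eval_eq', MvPolynomial.eval_eq', Finset.mul_sum]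
  apply Finset.sum_congr rfl
  intro d hd
  have hdeg : ∑ i, d i = n := by
    have h2 := hp (MvPolynomial.mem_support_iff.mp hd)
    rw [show (Finsupp.weight 1 : (Fin m →₀ ℕ) →+ ℕ) = Finsupp.weight (fun _ => 1) from rfl,
      ← Finsupp.degree_eq_weight_one] at h2
    rw [← h2, Finsupp.degree_apply]
    exact (Finset.sum_subset (Finset.subset_univ _)
      (fun i _ hi => by simpa using Finsupp.notMem_support_iff.mp hi)).symm
  calc MvPolynomial.coeff d p * ∏ i, (c * z i) ^ d i
      = MvPolynomial.coeff d p * ((∏ i, c ^ d i) * ∏ i, z i ^ d i) := by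
        rw [← Finset.prod_mul_distrib]; simp [mul_pow]
    _ = c ^ n * (MvPolynomial.coeff d p * ∏ i, z i ^ d i) := by
        rw [Finset.prod_pow_eq_pow_sum, hdeg]; ring

/-- if p is homogeneous H-stable, X, Y ∈ ℝ^m and X + Y > 0
coordinatewise, then every complex root of t ↦ p(tX + Y) is real. -/
theorem stmt_8 (m n : ℕ) (p : MvPolynomial (Fin m) ℂ) (hp : p.IsHomogeneous n)
    (hst : ∀ z : Fin m → ℂ, (∀ i, 0 < (z i).re) → MvPolynomial.eval z p ≠ 0)
    (X Y : Fin m → ℝ) (hXY : ∀ i, 0 < X i + Y i) :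
    ∀ t : ℂ, MvPolynomial.eval (fun i => t * (X i : ℂ) + (Y i : ℂ)) p = 0 → t.im = 0 := by
  intro t h0
  by_contra him
  set ε : ℝ := if 0 < t.im then 1 else -1 with hε
  have hεim : 0 < ε * t.im := by
    rcases lt_or_gt_of_ne him with h | h
    · have : ε = -1 := by simp [hε, not_lt.mpr h.le]
      rw [this]; nlinarith
    · have : ε = 1 := by simp [hε, h]
      rw [this]; nlinarith
  set w : ℂ := (ε : ℂ) * (Complex.I * (starRingEnd ℂ) (t - 1)) with hw
  have hwre : w.re = ε * t.im := by
    simp [hw, Complex.mul_re, Complex.mul_im]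
  have hwd : (w * (t - 1)).re = 0 := by
    have : w * (t - 1) = (ε : ℂ) * (Complex.I * ((t - 1) * (starRingEnd ℂ) (t - 1))) := by
      rw [hw]; ring
    rw [this, Complex.mul_conj]
    simp [Complex.mul_re, Complex.mul_im]
  have key : ∀ i, 0 < (w * (t * (X i : ℂ) + (Y i : ℂ))).re := by
    intro i
    have heq : w * (t * (X i : ℂ) + (Y i : ℂ))
        = ((X i + Y i : ℝ) : ℂ) * w + ((X i : ℝ) : ℂ) * (w * (t - 1)) := by
      push_cast; ring
    rw [heq]
    have : (((X i + Y i : ℝ) : ℂ) * w + ((X i : ℝ) : ℂ) * (w * (t - 1))).re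
        = (X i + Y i) * w.re + (X i) * (w * (t - 1)).re := by
      simp [Complex.add_re, Complex.mul_re]
    rw [this, hwd, hwre]
    have := hXY i
    nlinarith
  apply hst _ key
  have : (fun i => w * (t * (X i : ℂ) + (Y i : ℂ)))
      = (fun i => w * ((fun j => t * (X j : ℂ) + (Y j : ℂ)) i)) := rfl
  rw [this, eval_mul_pow_aux p hp w, h0, mul_zero]
end

section
/- If p is a homogeneous H-stable polynomial of degree n in m variables and X is a point with all positive coordinates, then every coefficient of p/p(X) is a nonnegative real number. -/
namespace Stmt9

variable {m : ℕ}

/-- directional derivative along a real vector -/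
noncomputable def dop (Y : Fin m → ℝ) (q : MvPolynomial (Fin m) ℂ) : MvPolynomial (Fin m) ℂ :=
  ∑ i, MvPolynomial.C (Y i : ℂ) * MvPolynomial.pderiv i q

/-- H-stability -/
def Stb (q : MvPolynomial (Fin m) ℂ) : Prop :=
  ∀ z : Fin m → ℂ, (∀ i, 0 < (z i).re) → MvPolynomial.eval z q ≠ 0

/-- the univariate restriction t ↦ q(z + tY) -/
noncomputable def gp (z : Fin m → ℂ) (Y : Fin m → ℝ) (q : MvPolynomial (Fin m) ℂ) :
    Polynomial ℂ :=
  MvPolynomial.aeval (fun i => Polynomial.C (z i) + Polynomial.C ((Y i : ℂ)) * Polynomial.X) q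

lemma gp_eval (z : Fin m → ℂ) (Y : Fin m → ℝ) (q : MvPolynomial (Fin m) ℂ) (t : ℂ) :
    (gp z Y q).eval t = MvPolynomial.eval (fun i => z i + (Y i : ℂ) * t) q := by
  rw [gp, show (Polynomial.eval t : Polynomial ℂ → ℂ) = ⇑(Polynomial.aeval t : Polynomial ℂ →ₐ[ℂ] ℂ) by
        exact (Polynomial.coe_aeval_eq_eval t).symm]
  rw [MvPolynomial.comp_aeval_apply]
  simp [MvPolynomial.aeval_def]

lemma gp_eval_zero (z : Fin m → ℂ) (Y : Fin m → ℝ) (q : MvPolynomial (Fin m) ℂ) :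
    (gp z Y q).eval 0 = MvPolynomial.eval z q := by
  rw [gp_eval]; norm_num

lemma sum_univ_of_mem_support {q : MvPolynomial (Fin m) ℂ} {n : ℕ} (hq : q.IsHomogeneous n)
    {d : Fin m →₀ ℕ} (hd : d ∈ q.support) : ∑ i, d i = n := by
  have h := hq (MvPolynomial.mem_support_iff.mp hd)
  rw [← h, Finsupp.weight_apply, Finsupp.sum_fintype] <;> simp

lemma eval_mul_of_isHomogeneous {q : MvPolynomial (Fin m) ℂ} {n : ℕ}
    (hq : q.IsHomogeneous n) (c : ℂ) (w : Fin m → ℂ) :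
    MvPolynomial.eval (fun i => c * w i) q = c ^ n * MvPolynomial.eval w q := by
  rw [MvPolynomial.eval_eq', MvPolynomial.eval_eq', Finset.mul_sum]
  apply Finset.sum_congr rfl
  intro d hd
  have hsum := sum_univ_of_mem_support hq hd
  calc q.coeff d * ∏ i, (c * w i) ^ d i
      = q.coeff d * ((∏ i, c ^ d i) * ∏ i, w i ^ d i) := by
        rw [← Finset.prod_mul_distrib]; simp [mul_pow]
    _ = c ^ n * (q.coeff d * ∏ i, w i ^ d i) := by
        rw [Finset.prod_pow_eq_pow_sum, hsum]; ring

lemma gp_eq_sum (z : Fin m → ℂ) (Y : Fin m → ℝ) (q : MvPolynomial (Fin m) ℂ) :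
    gp z Y q = ∑ d ∈ q.support, Polynomial.C (q.coeff d) *
          ∏ i, (Polynomial.C (z i) + Polynomial.C ((Y i : ℂ)) * Polynomial.X) ^ d i := by
  rw [gp]
  conv_lhs => rw [← MvPolynomial.support_sum_monomial_coeff q]
  rw [map_sum]
  refine Finset.sum_congr rfl fun d hd => ?_
  rw [MvPolynomial.aeval_monomial, Finsupp.prod_fintype]
  · simp [Polynomial.algebraMap_eq]
  · intro; exact pow_zero _

lemma gp_natDegree_le {q : MvPolynomial (Fin m) ℂ} {n : ℕ} (hq : q.IsHomogeneous n)
    (z : Fin m → ℂ) (Y : Fin m → ℝ) : (gp z Y q).natDegree ≤ n := by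
  rw [gp_eq_sum]
  apply Polynomial.natDegree_sum_le_of_forall_le
  intro d hd
  apply le_trans (Polynomial.natDegree_C_mul_le _ _)
  apply le_trans (Polynomial.natDegree_prod_le _ _)
  calc ∑ i, ((Polynomial.C (z i) + Polynomial.C ((Y i:ℂ)) * Polynomial.X) ^ d i).natDegree
      ≤ ∑ i, d i := by
        apply Finset.sum_le_sum
        intro i _
        apply le_trans (Polynomial.natDegree_pow_le)
        calc d i * (Polynomial.C (z i) + Polynomial.C ((Y i:ℂ)) * Polynomial.X).natDegree
            ≤ d i * 1 := by
              apply Nat.mul_le_mul_left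
              apply le_trans (Polynomial.natDegree_add_le _ _)
              simp
              apply le_trans (Polynomial.natDegree_mul_le)
              simp
          _ = d i := mul_one _
    _ = n := sum_univ_of_mem_support hq hd

lemma gp_coeff_top {q : MvPolynomial (Fin m) ℂ} {n : ℕ} (hq : q.IsHomogeneous n)
    (z : Fin m → ℂ) {Y : Fin m → ℝ} (hY : ∀ i, Y i ≠ 0) :
    (gp z Y q).coeff n = MvPolynomial.eval (fun i => (Y i : ℂ)) q := by
  rw [gp_eq_sum, Polynomial.finset_sum_coeff, MvPolynomial.eval_eq']
  refine Finset.sum_congr rfl fun d hd => ?_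
  have hfac : ∀ i : Fin m, Polynomial.C (z i) + Polynomial.C ((Y i:ℂ)) * Polynomial.X
      = Polynomial.C ((Y i : ℂ)) * (Polynomial.X + Polynomial.C (z i / (Y i:ℂ))) := by
    intro i
    have : ((Y i : ℂ)) ≠ 0 := by exact_mod_cast hY i
    rw [mul_add, ← Polynomial.C_mul, mul_div_cancel₀ _ this]
    ring
  simp_rw [hfac, mul_pow, ← Polynomial.C_pow]
  rw [Finset.prod_mul_distrib, ← map_prod (Polynomial.C : ℂ →+* Polynomial ℂ) _ Finset.univ,
    ← mul_assoc, ← Polynomial.C_mul, Polynomial.coeff_C_mul]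
  have hM : (∏ x : Fin m, (Polynomial.X + Polynomial.C (z x / (Y x:ℂ))) ^ d x).Monic :=
    Polynomial.monic_prod_of_monic _ _ (fun i _ => (Polynomial.monic_X_add_C _).pow _)
  have hdeg : (∏ x : Fin m, (Polynomial.X + Polynomial.C (z x / (Y x:ℂ))) ^ d x).natDegree = n := by
    rw [Polynomial.natDegree_prod _ _ (fun i _ => ((Polynomial.monic_X_add_C _).pow _).ne_zero)]
    simp only [Polynomial.natDegree_pow, Polynomial.natDegree_X_add_C, mul_one]
    exact sum_univ_of_mem_support hq hd
  rw [← hdeg, hM.coeff_natDegree, mul_one]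

lemma gp_derivative (z : Fin m → ℂ) (Y : Fin m → ℝ) (q : MvPolynomial (Fin m) ℂ) :
    Polynomial.derivative (gp z Y q)
    = ∑ i, Polynomial.C ((Y i : ℂ)) * gp z Y (MvPolynomial.pderiv i q) := by
  rw [gp]
  simp only [gp]
  set F := (MvPolynomial.aeval (fun i => Polynomial.C (z i) + Polynomial.C ((Y i : ℂ)) * Polynomial.X) :
    MvPolynomial (Fin m) ℂ →ₐ[ℂ] Polynomial ℂ) with hF
  induction q using MvPolynomial.induction_on with
  | C a => simp [hF]
  | add p q hp hq =>
      simp only [map_add, hp, hq, mul_add, Finset.sum_add_distrib]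
  | mul_X p i hp =>
      have hfi : Polynomial.derivative (Polynomial.C (z i) + Polynomial.C ((Y i:ℂ)) * Polynomial.X)
          = Polynomial.C ((Y i:ℂ)) := by simp
      have hFX : F (MvPolynomial.X i) = Polynomial.C (z i) + Polynomial.C ((Y i:ℂ)) * Polynomial.X := by
        simp [hF]
      rw [map_mul, hFX, Polynomial.derivative_mul, hp, hfi, eq_comm]
      have hpt : ∀ x : Fin m, Polynomial.C ((Y x:ℂ)) * F (MvPolynomial.pderiv x (p * MvPolynomial.X i))
          = Polynomial.C ((Y x:ℂ)) * F (MvPolynomial.pderiv x p) *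
              (Polynomial.C (z i) + Polynomial.C ((Y i:ℂ)) * Polynomial.X)
            + (if i = x then Polynomial.C ((Y x:ℂ)) * F p else 0) := by
        intro x
        rw [MvPolynomial.pderiv_mul]
        by_cases h : i = x
        · subst h
          simp only [MvPolynomial.pderiv_X_self, if_true, mul_one, map_add, map_mul, hFX]
          ring
        · rw [MvPolynomial.pderiv_X_of_ne h]
          simp only [mul_zero, map_add, map_mul, map_zero, if_neg h, add_zero, hFX]
          ring
      rw [Finset.sum_congr rfl (fun x _ => hpt x), Finset.sum_add_distrib,
        Finset.sum_ite_eq Finset.univ i, ← Finset.sum_mul]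
      simp only [Finset.mem_univ, if_true]
      ring

lemma eval_dop (z : Fin m → ℂ) (Y : Fin m → ℝ) (q : MvPolynomial (Fin m) ℂ) :
    MvPolynomial.eval z (dop Y q) = (gp z Y q).coeff 1 := by
  have h1 : (gp z Y q).coeff 1 = (Polynomial.derivative (gp z Y q)).eval 0 := by
    rw [← Polynomial.coeff_zero_eq_eval_zero, Polynomial.coeff_derivative]
    norm_num
  rw [h1, gp_derivative, Polynomial.eval_finset_sum, dop, map_sum]
  refine Finset.sum_congr rfl fun i _ => ?_
  rw [Polynomial.eval_mul, Polynomial.eval_C, gp_eval_zero]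
  simp

lemma coeff_pderiv (i : Fin m) (q : MvPolynomial (Fin m) ℂ) (τ : Fin m →₀ ℕ) :
    MvPolynomial.coeff τ (MvPolynomial.pderiv i q)
      = ((τ i : ℂ) + 1) * MvPolynomial.coeff (τ + Finsupp.single i 1) q := by
  induction q using MvPolynomial.induction_on' with
  | add p q hp hq => simp only [map_add, MvPolynomial.coeff_add, hp, hq]; ring
  | monomial s a =>
      rw [MvPolynomial.pderiv_monomial]
      rw [MvPolynomial.coeff_monomial, MvPolynomial.coeff_monomial]
      by_cases h : s = τ + Finsupp.single i 1
      · subst h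
        rw [if_pos (add_tsub_cancel_right _ _)]
        simp [Finsupp.add_apply, Finsupp.single_eq_same, mul_comm]
      · rw [if_neg h]
        by_cases h2 : s - Finsupp.single i 1 = τ
        · by_cases h3 : s i = 0
          · simp [h3]
          · exfalso
            apply h
            rw [← h2]
            ext j
            simp only [Finsupp.add_apply, Finsupp.tsub_apply, Finsupp.single_apply]
            by_cases hj : i = j
            · subst hj; simp only [if_pos rfl]; simp; omega
            · simp [hj]
        · rw [if_neg h2, mul_zero]

lemma pderiv_isHomogeneous {q : MvPolynomial (Fin m) ℂ} {n : ℕ}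
    (hq : q.IsHomogeneous n) (i : Fin m) :
    (MvPolynomial.pderiv i q).IsHomogeneous (n - 1) := by
  intro d hd
  rw [coeff_pderiv] at hd
  have h2 : MvPolynomial.coeff (d + Finsupp.single i 1) q ≠ 0 := by
    intro h; rw [h, mul_zero] at hd; exact hd rfl
  have h3 := hq h2
  rw [map_add] at h3
  have h4 : (Finsupp.weight 1) (Finsupp.single i 1) = 1 := by
    simp [Finsupp.weight_apply, Finsupp.sum_fintype, Finsupp.single_apply]
  omega

lemma dop_isHomogeneous {q : MvPolynomial (Fin m) ℂ} {n : ℕ}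
    (hq : q.IsHomogeneous n) (Y : Fin m → ℝ) :
    (dop Y q).IsHomogeneous (n - 1) := by
  rw [dop, ← MvPolynomial.mem_homogeneousSubmodule]
  apply Submodule.sum_mem
  intro i _
  rw [MvPolynomial.mem_homogeneousSubmodule]
  exact ((pderiv_isHomogeneous hq i).C_mul _)

lemma ms_complex (R : Multiset ℂ) (hR : ∀ r ∈ R, r.re < 0) :
    ((R.map fun a => Polynomial.X - Polynomial.C a).prod.coeff 0 ≠ 0) ∧
    0 ≤ (((R.map fun a => Polynomial.X - Polynomial.C a).prod.coeff 1) /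
          ((R.map fun a => Polynomial.X - Polynomial.C a).prod.coeff 0)).re ∧
    (R ≠ 0 → 0 < (((R.map fun a => Polynomial.X - Polynomial.C a).prod.coeff 1) /
          ((R.map fun a => Polynomial.X - Polynomial.C a).prod.coeff 0)).re) := by
  induction R using Multiset.induction_on with
  | empty => simp [Polynomial.coeff_one]
  | cons a R ih =>
      have ha : a.re < 0 := hR a (Multiset.mem_cons_self a R)
      have ha0 : a ≠ 0 := by intro h; rw [h] at ha; simp at ha
      obtain ⟨h0, h1, _⟩ := ih (fun r hr => hR r (Multiset.mem_cons_of_mem hr))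
      set P := (R.map fun a => Polynomial.X - Polynomial.C a).prod with hP
      have hcons : ((a ::ₘ R).map fun a => Polynomial.X - Polynomial.C a).prod
          = (Polynomial.X - Polynomial.C a) * P := by
        rw [Multiset.map_cons, Multiset.prod_cons]
      have hc0 : ((Polynomial.X - Polynomial.C a) * P).coeff 0 = -a * P.coeff 0 := by
        rw [Polynomial.mul_coeff_zero]; simp
      have hc1 : ((Polynomial.X - Polynomial.C a) * P).coeff 1 = P.coeff 0 - a * P.coeff 1 := by
        rw [sub_mul, Polynomial.coeff_sub]
        rw [show (1:ℕ) = 0 + 1 by rfl, Polynomial.coeff_X_mul, Polynomial.coeff_C_mul]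
      have hratio : ((Polynomial.X - Polynomial.C a) * P).coeff 1 /
            ((Polynomial.X - Polynomial.C a) * P).coeff 0
          = (-a)⁻¹ + P.coeff 1 / P.coeff 0 := by
        rw [hc0, hc1, div_eq_iff (mul_ne_zero (neg_ne_zero.mpr ha0) h0)]
        have expand : ((-a)⁻¹ + P.coeff 1 / P.coeff 0) * (-a * P.coeff 0)
            = (-a)⁻¹ * (-a) * P.coeff 0 + P.coeff 1 / P.coeff 0 * P.coeff 0 * (-a) := by ring
        rw [expand, inv_mul_cancel₀ (neg_ne_zero.mpr ha0), div_mul_cancel₀ _ h0]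
        ring
      have hinvre : 0 < ((-a)⁻¹).re := by
        rw [Complex.inv_re]
        apply div_pos
        · simp [ha]
        · simpa [Complex.normSq_pos] using (neg_ne_zero.mpr ha0)
      refine ⟨?_, ?_, ?_⟩
      · rw [hcons, hc0]; exact mul_ne_zero (neg_ne_zero.mpr ha0) h0
      · rw [hcons, hratio, Complex.add_re]; linarith
      · intro _; rw [hcons, hratio, Complex.add_re]; linarith

lemma ms_real (R : Multiset ℂ) (hR : ∀ r ∈ R, r.im = 0 ∧ r.re < 0) :
    (0 < ((R.map fun a => Polynomial.X - Polynomial.C a).prod.coeff 0).re ∧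
      ((R.map fun a => Polynomial.X - Polynomial.C a).prod.coeff 0).im = 0) ∧
    (0 ≤ ((R.map fun a => Polynomial.X - Polynomial.C a).prod.coeff 1).re ∧
      ((R.map fun a => Polynomial.X - Polynomial.C a).prod.coeff 1).im = 0) ∧
    (R ≠ 0 → 0 < ((R.map fun a => Polynomial.X - Polynomial.C a).prod.coeff 1).re) := by
  induction R using Multiset.induction_on with
  | empty => simp [Polynomial.coeff_one]
  | cons a R ih =>
      obtain ⟨haim, hare⟩ := hR a (Multiset.mem_cons_self a R)
      obtain ⟨⟨i0re, i0im⟩, ⟨i1re, i1im⟩, _⟩ := ih (fun r hr => hR r (Multiset.mem_cons_of_mem hr))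
      set P := (R.map fun a => Polynomial.X - Polynomial.C a).prod with hP
      have hcons : ((a ::ₘ R).map fun a => Polynomial.X - Polynomial.C a).prod
          = (Polynomial.X - Polynomial.C a) * P := by
        rw [Multiset.map_cons, Multiset.prod_cons]
      have hc0 : ((Polynomial.X - Polynomial.C a) * P).coeff 0 = -a * P.coeff 0 := by
        rw [Polynomial.mul_coeff_zero]; simp
      have hc1 : ((Polynomial.X - Polynomial.C a) * P).coeff 1 = P.coeff 0 - a * P.coeff 1 := by
        rw [sub_mul, Polynomial.coeff_sub]
        rw [show (1:ℕ) = 0 + 1 by rfl, Polynomial.coeff_X_mul, Polynomial.coeff_C_mul]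
      have key1 : 0 < (((Polynomial.X - Polynomial.C a) * P).coeff 1).re := by
        rw [hc1]
        simp only [Complex.sub_re, Complex.mul_re, haim, i1im]
        nlinarith
      rw [hcons]
      refine ⟨⟨?_, ?_⟩, ⟨le_of_lt key1, ?_⟩, fun _ => key1⟩
      · rw [hc0]
        simp only [Complex.mul_re, Complex.neg_re, Complex.neg_im, haim, i0im]
        nlinarith
      · rw [hc0]
        simp only [Complex.mul_im, Complex.neg_re, Complex.neg_im, haim, i0im]
        ring
      · rw [hc1]
        simp only [Complex.sub_im, Complex.mul_im, haim, i0im, i1im]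
        ring

lemma roots_re_neg {q : MvPolynomial (Fin m) ℂ} (hst : Stb q)
    {z : Fin m → ℂ} {Y : Fin m → ℝ} (hz : ∀ i, 0 < (z i).re) (hY : ∀ i, 0 < Y i) :
    ∀ r ∈ (gp z Y q).roots, r.re < 0 := by
  intro r hr
  have hroot : (gp z Y q).eval r = 0 := (Polynomial.mem_roots'.mp hr).2
  rw [gp_eval] at hroot
  by_contra h
  push_neg at h
  refine hst (fun i => z i + (Y i : ℂ) * r) (fun i => ?_) hroot
  have : ((Y i : ℂ) * r).re = Y i * r.re := by
    simp [Complex.re_ofReal_mul]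
  rw [Complex.add_re, this]
  have := hz i
  nlinarith [hY i]

lemma roots_real {q : MvPolynomial (Fin m) ℂ} {n : ℕ} (hq : q.IsHomogeneous n) (hst : Stb q)
    {X Y : Fin m → ℝ} (hX : ∀ i, 0 < X i) (hY : ∀ i, 0 < Y i) :
    ∀ r ∈ (gp (fun i => (X i : ℂ)) Y q).roots, r.im = 0 ∧ r.re < 0 := by
  intro r hr
  have hroot : (gp (fun i => (X i : ℂ)) Y q).eval r = 0 := (Polynomial.mem_roots'.mp hr).2
  rw [gp_eval] at hroot
  set w : Fin m → ℂ := fun i => (X i : ℂ) + (Y i : ℂ) * r with hw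
  have hwre : ∀ i, (w i).re = X i + Y i * r.re := by
    intro i; simp [hw, Complex.add_re, Complex.re_ofReal_mul]
  have hwim : ∀ i, (w i).im = Y i * r.im := by
    intro i; simp [hw, Complex.add_im, Complex.im_ofReal_mul]
  have him : r.im = 0 := by
    by_contra him
    cases isEmpty_or_nonempty (Fin m) with
    | inl hemp => exact hst w (fun i => (hemp.elim i)) hroot
    | inr hne =>
      set s : ℝ := if 0 < r.im then 1 else -1 with hs
      have habs : 0 < s * r.im := by
        by_cases hpos : 0 < r.im
        · rw [hs, if_pos hpos]; linarith
        · rw [hs, if_neg hpos]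
          have : r.im < 0 := lt_of_le_of_ne (not_lt.mp hpos) him
          nlinarith
      have huniv : (Finset.univ : Finset (Fin m)).Nonempty := Finset.univ_nonempty
      set δ : ℝ := Finset.univ.inf' huniv
        (fun i => (Y i * (s * r.im)) / (1 + |X i + Y i * r.re|)) with hδ
      have hδpos : 0 < δ := by
        rw [hδ, Finset.lt_inf'_iff]
        intro i _
        apply div_pos (mul_pos (hY i) habs)
        positivity
      set u : ℂ := (δ : ℂ) - (s : ℂ) * Complex.I with hu
      have hure : u.re = δ := by simp [hu]
      have huim : u.im = -s := by simp [hu]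
      have hu0 : u ≠ 0 := by
        intro h
        have : u.im = 0 := by rw [h]; simp
        rw [huim] at this
        by_cases hpos : 0 < r.im
        · rw [hs, if_pos hpos] at this; norm_num at this
        · rw [hs, if_neg hpos] at this; norm_num at this
      have heval : MvPolynomial.eval (fun i => u * w i) q = 0 := by
        rw [eval_mul_of_isHomogeneous hq u w, hroot, mul_zero]
      refine hst (fun i => u * w i) (fun i => ?_) heval
      have hδle : δ ≤ (Y i * (s * r.im)) / (1 + |X i + Y i * r.re|) :=
        Finset.inf'_le _ (Finset.mem_univ i)
      have habsle : δ * (1 + |X i + Y i * r.re|) ≤ Y i * (s * r.im) := by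
        rw [div_eq_mul_inv] at hδle
        have h1 : (0:ℝ) < 1 + |X i + Y i * r.re| := by positivity
        calc δ * (1 + |X i + Y i * r.re|)
            ≤ (Y i * (s * r.im)) * (1 + |X i + Y i * r.re|)⁻¹ * (1 + |X i + Y i * r.re|) := by
              apply mul_le_mul_of_nonneg_right hδle (le_of_lt h1)
          _ = Y i * (s * r.im) := by field_simp
      rw [Complex.mul_re, hwre, hwim, hure, huim]
      have habs2 : |X i + Y i * r.re| * δ < Y i * (s * r.im) := by
        nlinarith [abs_nonneg (X i + Y i * r.re)]
      nlinarith [le_abs_self (X i + Y i * r.re), neg_abs_le (X i + Y i * r.re)]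
  refine ⟨him, ?_⟩
  by_contra h
  push_neg at h
  refine hst w (fun i => ?_) hroot
  rw [hwre]
  nlinarith [hX i, hY i]

lemma key_main {q : MvPolynomial (Fin m) ℂ} {n : ℕ} (hn : 1 ≤ n) (hq : q.IsHomogeneous n)
    (hst : Stb q) {Y : Fin m → ℝ} (hY : ∀ i, 0 < Y i) :
    Stb (dop Y q) ∧
    ∀ X : Fin m → ℝ, (∀ i, 0 < X i) →
      ∃ c : ℝ, 0 < c ∧ MvPolynomial.eval (fun i => (X i : ℂ)) (dop Y q)
        = (c : ℂ) * MvPolynomial.eval (fun i => (X i : ℂ)) q := by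
  have setup : ∀ z : Fin m → ℂ, (∀ i, 0 < (z i).re) →
      (gp z Y q) ≠ 0 ∧ (gp z Y q).roots.card = n ∧
      (gp z Y q).roots ≠ 0 ∧
      MvPolynomial.eval z q = (gp z Y q).leadingCoeff *
        ((gp z Y q).roots.map fun a => Polynomial.X - Polynomial.C a).prod.coeff 0 ∧
      MvPolynomial.eval z (dop Y q) = (gp z Y q).leadingCoeff *
        ((gp z Y q).roots.map fun a => Polynomial.X - Polynomial.C a).prod.coeff 1 ∧
      (gp z Y q).leadingCoeff ≠ 0 := by
    intro z hz
    have h0 : (gp z Y q).eval 0 ≠ 0 := by rw [gp_eval_zero]; exact hst z hz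
    have hne : gp z Y q ≠ 0 := fun h => h0 (by rw [h]; simp)
    have hcard : (gp z Y q).roots.card = (gp z Y q).natDegree :=
      Polynomial.splits_iff_card_roots.mp (IsAlgClosed.splits _)
    have hYc : ∀ i, 0 < ((fun i => ((Y i : ℂ))) i).re := by
      intro i; simp [Complex.ofReal_re]; exact hY i
    have hcoefftop : (gp z Y q).coeff n ≠ 0 := by
      rw [gp_coeff_top hq z (fun i => ne_of_gt (hY i))]
      exact hst _ hYc
    have hdeg : (gp z Y q).natDegree = n :=
      le_antisymm (gp_natDegree_le hq z Y) (Polynomial.le_natDegree_of_ne_zero hcoefftop)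
    have hfac := Polynomial.C_leadingCoeff_mul_prod_multiset_X_sub_C
      (p := gp z Y q) (by rw [hcard])
    have hcardn : (gp z Y q).roots.card = n := by rw [hcard, hdeg]
    refine ⟨hne, hcardn, ?_, ?_, ?_, ?_⟩
    · intro h
      rw [h] at hcardn
      simp at hcardn
      omega
    · have h := congrArg (fun pp => Polynomial.coeff pp 0) hfac
      simp only [Polynomial.coeff_C_mul] at h
      rw [← gp_eval_zero z Y q, ← Polynomial.coeff_zero_eq_eval_zero, ← h]
    · have h := congrArg (fun pp => Polynomial.coeff pp 1) hfac
      simp only [Polynomial.coeff_C_mul] at h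
      rw [eval_dop, ← h]
    · exact Polynomial.leadingCoeff_ne_zero.mpr hne
  constructor
  · intro z hz
    obtain ⟨hne, hcardn, hR0, hev0, hev1, hlc⟩ := setup z hz
    obtain ⟨hc0, _, hstrict⟩ := ms_complex (gp z Y q).roots (roots_re_neg hst hz hY)
    have h1 : ((gp z Y q).roots.map fun a => Polynomial.X - Polynomial.C a).prod.coeff 1 ≠ 0 := by
      intro h
      have := hstrict hR0
      rw [h, zero_div] at this
      simp at this
    rw [hev1]
    exact mul_ne_zero hlc h1
  · intro X hX
    have hXc : ∀ i, 0 < ((fun i => ((X i : ℂ))) i).re := by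
      intro i; simp [Complex.ofReal_re]; exact hX i
    obtain ⟨hne, hcardn, hR0, hev0, hev1, hlc⟩ := setup (fun i => (X i : ℂ)) hXc
    obtain ⟨⟨p0re, p0im⟩, ⟨p1re, p1im⟩, hstrict⟩ :=
      ms_real (gp (fun i => (X i : ℂ)) Y q).roots (roots_real hq hst hX hY)
    set c0 := ((gp (fun i => (X i : ℂ)) Y q).roots.map
      fun a => Polynomial.X - Polynomial.C a).prod.coeff 0 with hc0def
    set c1 := ((gp (fun i => (X i : ℂ)) Y q).roots.map
      fun a => Polynomial.X - Polynomial.C a).prod.coeff 1 with hc1def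
    refine ⟨c1.re / c0.re, div_pos (hstrict hR0) p0re, ?_⟩
    rw [hev0, hev1]
    have hc0r : c0 = ((c0.re : ℝ) : ℂ) := by
      apply Complex.ext <;> simp [p0im]
    have hc1r : c1 = ((c1.re : ℝ) : ℂ) := by
      apply Complex.ext <;> simp [p1im]
    have hkey : ((c1.re / c0.re : ℝ) : ℂ) * c0 = c1 := by
      apply Complex.ext
      · simp only [Complex.mul_re, Complex.ofReal_re, Complex.ofReal_im, p0im, p1im,
          mul_zero, zero_mul, sub_zero]
        field_simp
      · simp only [Complex.mul_im, Complex.ofReal_re, Complex.ofReal_im, p0im, p1im,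
          mul_zero, zero_mul, add_zero]
    linear_combination (-(gp (fun i => ((X i : ℂ))) Y q).leadingCoeff) * hkey


/-- iterated directional derivatives -/
noncomputable def iter : List (Fin m → ℝ) → MvPolynomial (Fin m) ℂ → MvPolynomial (Fin m) ℂ
  | [], q => q
  | Y :: T, q => iter T (dop Y q)

lemma iter_nil (q : MvPolynomial (Fin m) ℂ) : iter [] q = q := rfl

lemma iter_cons (Y : Fin m → ℝ) (T : List (Fin m → ℝ)) (q : MvPolynomial (Fin m) ℂ) :
    iter (Y :: T) q = iter T (dop Y q) := rfl

lemma dop_add (Y : Fin m → ℝ) (q r : MvPolynomial (Fin m) ℂ) :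
    dop Y (q + r) = dop Y q + dop Y r := by
  simp [dop, map_add, mul_add, Finset.sum_add_distrib]

lemma dop_C_mul (Y : Fin m → ℝ) (a : ℂ) (q : MvPolynomial (Fin m) ℂ) :
    dop Y (MvPolynomial.C a * q) = MvPolynomial.C a * dop Y q := by
  simp only [dop, MvPolynomial.pderiv_C_mul, Finset.mul_sum]
  exact Finset.sum_congr rfl fun i _ => by ring

lemma iter_add (L : List (Fin m → ℝ)) : ∀ q r : MvPolynomial (Fin m) ℂ,
    iter L (q + r) = iter L q + iter L r := by
  induction L with
  | nil => intro q r; rfl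
  | cons Y T ih => intro q r; rw [iter_cons, dop_add, ih, iter_cons, iter_cons]

lemma iter_C_mul (L : List (Fin m → ℝ)) : ∀ (a : ℂ) (q : MvPolynomial (Fin m) ℂ),
    iter L (MvPolynomial.C a * q) = MvPolynomial.C a * iter L q := by
  induction L with
  | nil => intro a q; rfl
  | cons Y T ih => intro a q; rw [iter_cons, dop_C_mul, ih, iter_cons]

lemma iter_ratio : ∀ (L : List (Fin m → ℝ)) (q : MvPolynomial (Fin m) ℂ),
    q.IsHomogeneous L.length → Stb q →
    (∀ Y ∈ L, ∀ i, 0 < Y i) → ∀ (X : Fin m → ℝ), (∀ i, 0 < X i) →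
    ∃ c : ℝ, 0 < c ∧ MvPolynomial.eval (fun i => (X i : ℂ)) (iter L q)
      = (c : ℂ) * MvPolynomial.eval (fun i => (X i : ℂ)) q := by
  intro L
  induction L with
  | nil =>
      intro q hq hst hpos X hX
      exact ⟨1, one_pos, by rw [iter_nil]; simp⟩
  | cons Y T ih =>
      intro q hq hst hpos X hX
      have hY : ∀ i, 0 < Y i := hpos Y List.mem_cons_self
      have hn : 1 ≤ (Y :: T).length := by simp
      obtain ⟨hstab', hrat⟩ := key_main hn hq hst hY
      obtain ⟨c1, hc1, hv1⟩ := hrat X hX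
      have hq' : (dop Y q).IsHomogeneous T.length := by
        have := dop_isHomogeneous hq Y
        simpa using this
      obtain ⟨c2, hc2, hv2⟩ := ih (dop Y q) hq' hstab'
        (fun Z hZ => hpos Z (List.mem_cons_of_mem Y hZ)) X hX
      refine ⟨c2 * c1, mul_pos hc2 hc1, ?_⟩
      rw [iter_cons, hv2, hv1]
      push_cast
      ring

lemma dop_split (A B : Fin m → ℝ) (ε : ℝ) (q : MvPolynomial (Fin m) ℂ) :
    dop (fun j => A j + ε * B j) q = dop A q + MvPolynomial.C ((ε : ℂ)) * dop B q := by
  simp only [dop, Finset.mul_sum, ← Finset.sum_add_distrib]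
  refine Finset.sum_congr rfl fun j _ => ?_
  have : ((A j + ε * B j : ℝ) : ℂ) = (A j : ℂ) + (ε : ℂ) * (B j : ℂ) := by push_cast; ring
  rw [this, map_add, map_mul]
  ring

lemma dop_basis (i : Fin m) (q : MvPolynomial (Fin m) ℂ) :
    dop (fun j => if j = i then (1:ℝ) else 0) q = MvPolynomial.pderiv i q := by
  rw [dop, Finset.sum_eq_single i]
  · simp
  · intro j _ hj
    simp [hj]
  · intro h
    exact absurd (Finset.mem_univ i) h

lemma iter_eps (ds : List (Fin m)) : ∀ q : MvPolynomial (Fin m) ℂ,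
    ∃ g : Polynomial (MvPolynomial (Fin m) ℂ), ∀ ε : ℝ,
      iter (ds.map fun i => fun j => (if j = i then (1:ℝ) else 0) + ε * 1) q
        = Polynomial.eval (MvPolynomial.C ((ε : ℂ))) g := by
  induction ds with
  | nil =>
      intro q
      exact ⟨Polynomial.C q, fun ε => by simp [iter_nil]⟩
  | cons i T ih =>
      intro q
      obtain ⟨g1, hg1⟩ := ih (MvPolynomial.pderiv i q)
      obtain ⟨g2, hg2⟩ := ih (dop (fun _ => (1:ℝ)) q)
      refine ⟨g1 + Polynomial.X * g2, fun ε => ?_⟩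
      rw [List.map_cons, iter_cons, dop_split (fun j => if j = i then (1:ℝ) else 0) (fun _ => 1) ε q,
        dop_basis, iter_add, iter_C_mul, hg1 ε, hg2 ε]
      simp

lemma hom0_eq_C {q : MvPolynomial (Fin m) ℂ} (hq : q.IsHomogeneous 0) :
    q = MvPolynomial.C (q.coeff 0) := by
  apply MvPolynomial.ext
  intro d
  rw [MvPolynomial.coeff_C]
  by_cases h : d = 0
  · subst h; simp
  · rw [if_neg (fun hh => h hh.symm)]
    by_contra hc
    apply h
    have hsum := sum_univ_of_mem_support hq (MvPolynomial.mem_support_iff.mpr hc)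
    ext j
    have := Finset.sum_eq_zero_iff.mp hsum j (Finset.mem_univ j)
    simpa using this

/-- multi-index of a list of variable indices -/
noncomputable def mlt : List (Fin m) → (Fin m →₀ ℕ)
  | [] => 0
  | i :: T => mlt T + Finsupp.single i 1

lemma mlt_apply (L : List (Fin m)) (j : Fin m) : mlt L j = L.count j := by
  induction L with
  | nil => simp [mlt]
  | cons i T ih =>
      rw [mlt, Finsupp.add_apply, ih, Finsupp.single_apply, List.count_cons]
      by_cases h : i = j
      · subst h; simp
      · rw [if_neg h, if_neg (by simp only [beq_iff_eq]; exact h)]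

lemma iter_basis (ℓ : List (Fin m)) : ∀ (q : MvPolynomial (Fin m) ℂ),
    q.IsHomogeneous ℓ.length →
    ∃ K : ℕ, 0 < K ∧ iter (ℓ.map fun i => fun j => if j = i then (1:ℝ) else 0) q
      = MvPolynomial.C ((K : ℂ) * q.coeff (mlt ℓ)) := by
  induction ℓ with
  | nil =>
      intro q hq
      refine ⟨1, one_pos, ?_⟩
      rw [List.map_nil, iter_nil]
      show q = _
      rw [hom0_eq_C hq]
      norm_num
      exact fun h => absurd rfl h
  | cons i T ih =>
      intro q hq
      have hq' : (MvPolynomial.pderiv i q).IsHomogeneous T.length := by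
        have := pderiv_isHomogeneous hq i
        simpa using this
      obtain ⟨K, hK, hiter⟩ := ih (MvPolynomial.pderiv i q) hq'
      refine ⟨K * ((mlt T) i + 1), by positivity, ?_⟩
      rw [List.map_cons, iter_cons, dop_basis, hiter, coeff_pderiv]
      show _ = MvPolynomial.C (_ * q.coeff (mlt T + Finsupp.single i 1))
      congr 1
      push_cast
      ring

end Stmt9

/-- if p is homogeneous H-stable and X > 0 is a real vector, then
every coefficient of p / p(X) is a nonnegative real number. -/
theorem stmt_9 (m n : ℕ) (p : MvPolynomial (Fin m) ℂ) (hp : p.IsHomogeneous n)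
    (hst : ∀ z : Fin m → ℂ, (∀ i, 0 < (z i).re) → MvPolynomial.eval z p ≠ 0)
    (X : Fin m → ℝ) (hX : ∀ i, 0 < X i) :
    ∀ d : Fin m →₀ ℕ,
      0 ≤ (p.coeff d / MvPolynomial.eval (fun i => (X i : ℂ)) p).re ∧
      (p.coeff d / MvPolynomial.eval (fun i => (X i : ℂ)) p).im = 0 := by
  classical
  intro d
  set pX := MvPolynomial.eval (fun i => (X i : ℂ)) p with hpXdef
  have hpXne : pX ≠ 0 := hst _ (fun i => by simpa using hX i)
  by_cases hw : (Finsupp.weight (1 : Fin m → ℕ)) d = n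
  case neg =>
    have h0 : p.coeff d = 0 := by
      by_contra hc
      exact hw (hp hc)
    rw [h0, zero_div]
    simp
  case pos =>
    set ℓ := (Finsupp.toMultiset d).toList with hℓ
    have hcount : ∀ j, ℓ.count j = d j := by
      intro j
      have h1 : ((ℓ : Multiset (Fin m))) = Finsupp.toMultiset d := Multiset.coe_toList _
      have h2 := Finsupp.count_toMultiset d j
      rw [← h1, Multiset.coe_count] at h2
      exact h2
    have hml : Stmt9.mlt ℓ = d := by
      ext j
      rw [Stmt9.mlt_apply]
      exact hcount j
    have hlen : ℓ.length = n := by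
      rw [hℓ, Multiset.length_toList, Finsupp.card_toMultiset, ← hw, Finsupp.weight_apply]
      simp [Finsupp.sum]
    obtain ⟨K, hK, hbasis⟩ := Stmt9.iter_basis ℓ p (by rw [hlen]; exact hp)
    obtain ⟨g, hg⟩ := Stmt9.iter_eps ℓ p
    set φ := (MvPolynomial.eval (fun i => (X i : ℂ)) : MvPolynomial (Fin m) ℂ →+* ℂ) with hφ
    set h : Polynomial ℂ := g.map φ with hh
    have hval : ∀ ε : ℝ,
        φ (Stmt9.iter (ℓ.map fun i => fun j => (if j = i then (1:ℝ) else 0) + ε * 1) p)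
          = h.eval ((ε : ℂ)) := by
      intro ε
      have heq := Polynomial.eval₂_at_apply (p := g) φ (MvPolynomial.C ((ε : ℂ)))
      rw [hg ε, hh, Polynomial.eval_map, ← heq]
      congr 1
      simp [hφ]
    have hpos : ∀ ε : ℝ, 0 < ε → ∃ c : ℝ, 0 < c ∧ h.eval ((ε : ℂ)) = (c : ℂ) * pX := by
      intro ε hε
      have hlen2 : (ℓ.map fun i => fun j => (if j = i then (1:ℝ) else 0) + ε * 1).length = n := by
        simp [hlen]
      obtain ⟨c, hc, hcv⟩ := Stmt9.iter_ratio
        (ℓ.map fun i => fun j => (if j = i then (1:ℝ) else 0) + ε * 1) p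
        (by rw [hlen2]; exact hp) hst
        (by
          intro Z hZ i
          obtain ⟨i0, _, rfl⟩ := List.mem_map.mp hZ
          by_cases hcase : i = i0 <;> simp [hcase] <;> linarith)
        X hX
      exact ⟨c, hc, by rw [← hval ε, hcv]⟩
    have h0 : h.eval 0 = (K : ℂ) * p.coeff d := by
      have hv := hval 0
      rw [Complex.ofReal_zero] at hv
      rw [← hv]
      have hmap0 : (ℓ.map fun i => fun j => (if j = i then (1:ℝ) else 0) + 0 * 1)
          = (ℓ.map fun i => fun j => if j = i then (1:ℝ) else 0) := by
        apply List.map_congr_left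
        intro i _
        funext j
        ring
      rw [hmap0, hbasis, hml]
      simp [hφ]
    have hcont : Continuous (fun ε : ℝ => h.eval ((ε : ℂ)) / pX) :=
      ((h.continuous).comp Complex.continuous_ofReal).div_const _
    have htend : Filter.Tendsto (fun ε : ℝ => h.eval ((ε : ℂ)) / pX)
        (nhdsWithin 0 (Set.Ioi 0)) (nhds (h.eval 0 / pX)) := by
      apply Filter.Tendsto.mono_left _ nhdsWithin_le_nhds
      have := hcont.tendsto 0
      simpa using this
    have hmem : ∀ᶠ ε : ℝ in nhdsWithin (0:ℝ) (Set.Ioi 0),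
        (h.eval ((ε : ℂ)) / pX) ∈ {z : ℂ | 0 ≤ z.re ∧ z.im = 0} := by
      filter_upwards [self_mem_nhdsWithin] with ε hε
      obtain ⟨c, hc, hcv⟩ := hpos ε hε
      rw [hcv, mul_div_assoc, div_self hpXne, mul_one]
      exact ⟨by simp [le_of_lt hc], by simp⟩
    have hclosed : IsClosed {z : ℂ | 0 ≤ z.re ∧ z.im = 0} :=
      (isClosed_le continuous_const Complex.continuous_re).inter
        (isClosed_eq Complex.continuous_im continuous_const)
    have hfin : (h.eval 0 / pX) ∈ {z : ℂ | 0 ≤ z.re ∧ z.im = 0} :=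
      hclosed.mem_of_tendsto htend hmem
    rw [h0, mul_div_assoc] at hfin
    obtain ⟨hre, him⟩ := hfin
    have hKpos : (0:ℝ) < K := by exact_mod_cast hK
    constructor
    · have hre2 : ((K : ℂ) * (p.coeff d / pX)).re = (K:ℝ) * (p.coeff d / pX).re := by
        simp [Complex.mul_re]
      rw [hre2] at hre
      nlinarith
    · have him2 : ((K : ℂ) * (p.coeff d / pX)).im = (K:ℝ) * (p.coeff d / pX).im := by
        simp [Complex.mul_im]
      rw [him2] at him
      have := mul_eq_zero.mp him
      rcases this with h1 | h2
      · exact absurd h1 (ne_of_gt hKpos)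
      · exact h2
end

section
/- If (p_i) is a sequence of H-stable homogeneous polynomials of degree n in m variables with nonnegative coefficients converging coefficientwise to p, then p is either identically zero or H-stable. -/
/-- A real polynomial with nonnegative coefficients is H-stable if it does not
vanish whenever all variables have positive real part. -/
def HStable {m : ℕ} (p : MvPolynomial (Fin m) ℝ) : Prop :=
  ∀ z : Fin m → ℂ, (∀ i, 0 < (z i).re) → (MvPolynomial.aeval z p : ℂ) ≠ 0

/-- Evaluation of a homogeneous polynomial at a scalar multiple. -/
lemma aux_eval_smul {m n : ℕ} {P : MvPolynomial (Fin m) ℂ} (h : P.IsHomogeneous n)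
    (c : ℂ) (v : Fin m → ℂ) :
    MvPolynomial.eval (fun j => c * v j) P = c ^ n * MvPolynomial.eval v P := by
  rw [MvPolynomial.eval_eq, MvPolynomial.eval_eq, Finset.mul_sum]
  refine Finset.sum_congr rfl fun d hd => ?_
  rw [MvPolynomial.mem_support_iff] at hd
  have hdeg : ∑ i ∈ d.support, d i = n := by
    have h1 := h hd
    have h2 : d.degree = n := by rw [Finsupp.degree_eq_weight_one]; exact h1
    simpa [Finsupp.degree_apply] using h2
  calc (MvPolynomial.coeff d P) * ∏ i ∈ d.support, (c * v i) ^ d i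
      = (MvPolynomial.coeff d P) * ((∏ i ∈ d.support, c ^ d i) * ∏ i ∈ d.support, v i ^ d i) := by
        rw [← Finset.prod_mul_distrib]; simp [mul_pow]
    _ = c ^ n * ((MvPolynomial.coeff d P) * ∏ i ∈ d.support, v i ^ d i) := by
        rw [Finset.prod_pow_eq_pow_sum, hdeg]; ring

/-- aeval commutes with conjugation for real polynomials. -/
lemma aux_aeval_conj {m : ℕ} (p : MvPolynomial (Fin m) ℝ) (w : Fin m → ℂ) :
    MvPolynomial.aeval (fun j => (starRingEnd ℂ) (w j)) p
      = (starRingEnd ℂ) (MvPolynomial.aeval w p) := by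
  rw [MvPolynomial.aeval_def, MvPolynomial.aeval_def,
    MvPolynomial.eval₂_comp_left (starRingEnd ℂ) (algebraMap ℝ ℂ) w p]
  congr 1
  · ext r
    simp [Complex.conj_ofReal]

/-- aeval at real points is the real evaluation. -/
lemma aux_aeval_real {m : ℕ} (p : MvPolynomial (Fin m) ℝ) (x : Fin m → ℝ) :
    MvPolynomial.aeval (fun j => ((x j : ℂ))) p = ((MvPolynomial.eval x p : ℝ) : ℂ) := by
  have := MvPolynomial.eval₂_comp_left (Complex.ofRealHom) (RingHom.id ℝ) x p
  simp only [MvPolynomial.eval] at *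
  rw [MvPolynomial.aeval_def]
  exact this.symm

/-- Step A: an H-stable polynomial does not vanish when all imaginary parts are positive. -/
lemma aux_upper {m n : ℕ} {p : MvPolynomial (Fin m) ℝ} (hhom : p.IsHomogeneous n)
    (hst : HStable p) (w : Fin m → ℂ) (hw : ∀ j, 0 < (w j).im) :
    MvPolynomial.aeval w p ≠ 0 := by
  intro h0
  have hP : (MvPolynomial.map (algebraMap ℝ ℂ) p).IsHomogeneous n := hhom.map _
  have key : MvPolynomial.aeval (fun j => (-Complex.I) * w j) p
      = (-Complex.I) ^ n * MvPolynomial.aeval w p := by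
    rw [MvPolynomial.aeval_def, MvPolynomial.aeval_def,
      MvPolynomial.eval₂_eq_eval_map, MvPolynomial.eval₂_eq_eval_map]
    exact aux_eval_smul hP _ _
  refine hst (fun j => (-Complex.I) * w j) (fun j => ?_) (by rw [key, h0, mul_zero])
  have : ((-Complex.I) * w j).re = (w j).im := by simp [Complex.mul_re]
  rw [this]; exact hw j

/-- Multiset product inequality. -/
lemma aux_multiset_prod_le {α : Type*} (s : Multiset α) (f g : α → ℝ)
    (h : ∀ a ∈ s, 0 ≤ f a ∧ f a ≤ g a) : (s.map f).prod ≤ (s.map g).prod := by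
  induction s using Multiset.induction with
  | empty => simp
  | cons a s ih =>
    simp only [Multiset.map_cons, Multiset.prod_cons]
    have ha := h a (Multiset.mem_cons_self a s)
    have hs : ∀ b ∈ s, 0 ≤ f b ∧ f b ≤ g b := fun b hb => h b (Multiset.mem_cons_of_mem hb)
    have h1 : (0:ℝ) ≤ (s.map f).prod :=
      Multiset.prod_nonneg (by
        intro x hx
        obtain ⟨b, hb, rfl⟩ := Multiset.mem_map.mp hx
        exact (hs b hb).1)
    have := ih hs
    have hga : 0 ≤ g a := le_trans ha.1 ha.2
    nlinarith [ha.1, ha.2, this, h1]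

/-- KEY: for H-stable homogeneous `p` and `x > 0`, `|p(x)| ≤ |p(x + iy)|`. -/
lemma aux_key {m n : ℕ} {p : MvPolynomial (Fin m) ℝ} (hhom : p.IsHomogeneous n)
    (hst : HStable p) (x y : Fin m → ℝ) (hx : ∀ j, 0 < x j) :
    |MvPolynomial.eval x p|
      ≤ ‖MvPolynomial.aeval (fun j => ((x j : ℂ) + (y j : ℂ) * Complex.I)) p‖ := by
  classical
  set F : Polynomial ℂ :=
    MvPolynomial.aeval (fun j => Polynomial.C (x j : ℂ) + Polynomial.C (y j : ℂ) * Polynomial.X) p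
    with hFdef
  have hFeval : ∀ t : ℂ,
      F.eval t = MvPolynomial.aeval (fun j => ((x j : ℂ) + (y j : ℂ) * t)) p := by
    intro t
    have hcomp := MvPolynomial.comp_aeval
      (φ := (Polynomial.aeval t : Polynomial ℂ →ₐ[ℂ] ℂ).restrictScalars ℝ)
      (f := fun j => Polynomial.C (x j : ℂ) + Polynomial.C (y j : ℂ) * Polynomial.X)
    have := congrArg (fun φ => φ p) hcomp
    simp only [AlgHom.coe_comp, Function.comp_apply, AlgHom.coe_restrictScalars'] at this
    rw [hFdef, ← Polynomial.coe_aeval_eq_eval]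
    simp only [this]
    simp
  have hF0 : F.eval 0 = ((MvPolynomial.eval x p : ℝ) : ℂ) := by
    rw [hFeval 0]
    simpa using aux_aeval_real p x
  have hF0ne : F.eval 0 ≠ 0 := by
    rw [hF0]
    intro h
    have hpx : MvPolynomial.aeval (fun j => ((x j : ℂ))) p = 0 := by
      rw [aux_aeval_real p x, h]
    exact hst (fun j => (x j : ℂ)) (fun j => by simpa using hx j) hpx
  have hFne : F ≠ 0 := fun h => hF0ne (by rw [h]; simp)
  -- all roots of F are real
  have hroots : ∀ s ∈ F.roots, s.im = 0 := by
    intro s hs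
    have hsz : F.eval s = 0 := (Polynomial.mem_roots hFne).mp hs
    have hs0 : s ≠ 0 := fun h => hF0ne (h ▸ hsz)
    rw [hFeval s] at hsz
    set c : ℂ := s⁻¹ with hc
    have hw : (fun j => ((x j : ℂ) + (y j : ℂ) * s)) = fun j => s * (c * (x j : ℂ) + (y j : ℂ)) := by
      funext j
      rw [hc, mul_add, ← mul_assoc, mul_inv_cancel₀ hs0, one_mul, mul_comm s]
    have hP : (MvPolynomial.map (algebraMap ℝ ℂ) p).IsHomogeneous n := hhom.map _
    have hzero : MvPolynomial.aeval (fun j => (c * (x j : ℂ) + (y j : ℂ))) p = 0 := by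
      have : MvPolynomial.aeval (fun j => s * (c * (x j : ℂ) + (y j : ℂ))) p
          = s ^ n * MvPolynomial.aeval (fun j => (c * (x j : ℂ) + (y j : ℂ))) p := by
        rw [MvPolynomial.aeval_def, MvPolynomial.aeval_def,
          MvPolynomial.eval₂_eq_eval_map, MvPolynomial.eval₂_eq_eval_map]
        exact aux_eval_smul hP _ _
      rw [hw, this] at hsz
      exact (mul_eq_zero.mp hsz).resolve_left (pow_ne_zero n hs0)
    have hcim : c.im = 0 := by
      by_contra hcim
      rcases lt_or_gt_of_ne hcim with hneg | hpos
      · -- c.im < 0 : conjugate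
        have hconj : MvPolynomial.aeval
            (fun j => (starRingEnd ℂ) (c * (x j : ℂ) + (y j : ℂ))) p = 0 := by
          rw [aux_aeval_conj, hzero, map_zero]
        refine aux_upper hhom hst _ (fun j => ?_) hconj
        have : ((starRingEnd ℂ) (c * (x j : ℂ) + (y j : ℂ))).im = -(c.im * x j) := by
          simp [Complex.mul_im]
        rw [this]
        have := mul_pos (neg_pos.mpr hneg) (hx j)
        linarith
      · refine aux_upper hhom hst _ (fun j => ?_) hzero
        have : (c * (x j : ℂ) + (y j : ℂ)).im = c.im * x j := by simp [Complex.mul_im]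
        rw [this]
        exact mul_pos hpos (hx j)
    have : s = c⁻¹ := by rw [hc, inv_inv]
    rw [this, Complex.inv_im, hcim]
    simp
  -- F splits over ℂ
  have hsplit := Polynomial.Splits.eq_prod_roots (IsAlgClosed.splits F)
  have hevalprod : ∀ t : ℂ, ‖F.eval t‖
      = ‖F.leadingCoeff‖ * (F.roots.map (fun a => ‖t - a‖)).prod := by
    intro t
    conv_lhs => rw [hsplit]
    rw [Polynomial.eval_mul, Polynomial.eval_C, Polynomial.eval_multiset_prod, norm_mul]
    rw [Multiset.map_map]
    congr 1
    rw [show (Polynomial.eval t ∘ fun a : ℂ => Polynomial.X - Polynomial.C a)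
        = (fun a : ℂ => t - a) by funext a; simp]
    rw [show ∀ w : ℂ, ‖w‖ = normHom w from fun _ => rfl, map_multiset_prod, Multiset.map_map]
    rfl
  have hle : (F.roots.map (fun a => ‖(0:ℂ) - a‖)).prod
      ≤ (F.roots.map (fun a => ‖Complex.I - a‖)).prod := by
    refine aux_multiset_prod_le _ _ _ (fun a ha => ⟨norm_nonneg _, ?_⟩)
    have him : a.im = 0 := hroots a ha
    have h1 : ‖(0:ℂ) - a‖ = Real.sqrt (a.re ^ 2) := by
      rw [zero_sub, norm_neg, Complex.norm_def, Complex.normSq_apply, him]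
      ring_nf
    have h2 : ‖Complex.I - a‖ = Real.sqrt (a.re ^ 2 + 1) := by
      rw [Complex.norm_def, Complex.normSq_apply]
      simp [Complex.sub_re, Complex.sub_im, him]
      ring_nf
    rw [h1, h2]
    exact Real.sqrt_le_sqrt (by nlinarith)
  have hfinal : ‖F.eval 0‖ ≤ ‖F.eval Complex.I‖ := by
    rw [hevalprod 0, hevalprod Complex.I]
    exact mul_le_mul_of_nonneg_left hle (norm_nonneg _)
  calc |MvPolynomial.eval x p| = ‖F.eval 0‖ := by rw [hF0, Complex.norm_real, Real.norm_eq_abs]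
    _ ≤ ‖F.eval Complex.I‖ := hfinal
    _ = _ := by rw [hFeval Complex.I]

/-- a coefficientwise limit of H-stable polynomials in Hom_+(m,n)
is either identically zero or H-stable. -/
theorem stmt_10 (m n : ℕ) (p : ℕ → MvPolynomial (Fin m) ℝ) (q : MvPolynomial (Fin m) ℝ)
    (hhom : ∀ i, (p i).IsHomogeneous n)
    (hnn : ∀ i d, 0 ≤ (p i).coeff d)
    (hst : ∀ i, HStable (p i))
    (hconv : ∀ d : Fin m →₀ ℕ,
      Filter.Tendsto (fun i => (p i).coeff d) Filter.atTop (nhds (q.coeff d))) :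
    q = 0 ∨ HStable q := by
  classical
  set D : Fin m →₀ ℕ := Finsupp.equivFunOnFinite.symm (fun _ => n) with hD
  set S : Finset (Fin m →₀ ℕ) := Finset.Iic D with hS
  have hsupp : ∀ i, (p i).support ⊆ S := by
    intro i d hd
    rw [hS, Finset.mem_Iic, Finsupp.le_def]
    intro j
    have h1 : d j ≤ d.degree := Finsupp.le_degree j d
    have h2 : d.degree = n := by
      rw [Finsupp.degree_eq_weight_one]
      exact hhom i (MvPolynomial.mem_support_iff.mp hd)
    have h3 : D j = n := rfl
    rw [h3]
    omega
  have hqS : ∀ d ∉ S, q.coeff d = 0 := by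
    intro d hd
    have h0 : (fun i => (p i).coeff d) = fun _ => (0 : ℝ) := by
      funext i
      exact MvPolynomial.notMem_support_iff.mp (fun h => hd (hsupp i h))
    have := hconv d
    rw [h0] at this
    exact tendsto_nhds_unique this tendsto_const_nhds
  have hqsupp : q.support ⊆ S := by
    intro d hd
    by_contra h
    exact MvPolynomial.mem_support_iff.mp hd (hqS d h)
  have hsumR : ∀ (r : MvPolynomial (Fin m) ℝ), r.support ⊆ S → ∀ x : Fin m → ℝ,
      MvPolynomial.eval x r = ∑ d ∈ S, (r.coeff d * ∏ i ∈ d.support, x i ^ d i) := by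
    intro r hr x
    rw [MvPolynomial.eval_eq]
    exact Finset.sum_subset hr (fun d _ hdr => by
      simp [MvPolynomial.notMem_support_iff.mp hdr])
  have hsumC : ∀ (r : MvPolynomial (Fin m) ℝ), r.support ⊆ S → ∀ z : Fin m → ℂ,
      MvPolynomial.aeval z r = ∑ d ∈ S, (Complex.ofReal (r.coeff d) * ∏ i ∈ d.support, z i ^ d i) := by
    intro r hr z
    rw [MvPolynomial.aeval_def, MvPolynomial.eval₂_eq]
    simp only [Complex.coe_algebraMap]
    exact Finset.sum_subset hr (fun d _ hdr => by
      simp [MvPolynomial.notMem_support_iff.mp hdr])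
  have htendR : ∀ x : Fin m → ℝ, Filter.Tendsto (fun i => MvPolynomial.eval x (p i))
      Filter.atTop (nhds (MvPolynomial.eval x q)) := by
    intro x
    rw [hsumR q hqsupp x]
    have he : ∀ i, MvPolynomial.eval x (p i)
        = ∑ d ∈ S, ((p i).coeff d * ∏ j ∈ d.support, x j ^ d j) :=
      fun i => hsumR _ (hsupp i) x
    simp only [he]
    exact tendsto_finset_sum _ (fun d _ => (hconv d).mul_const _)
  have htendC : ∀ z : Fin m → ℂ, Filter.Tendsto (fun i => MvPolynomial.aeval z (p i))
      Filter.atTop (nhds (MvPolynomial.aeval z q)) := by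
    intro z
    rw [hsumC q hqsupp z]
    have he : ∀ i, MvPolynomial.aeval z (p i)
        = ∑ d ∈ S, (Complex.ofReal ((p i).coeff d) * ∏ j ∈ d.support, z j ^ d j) :=
      fun i => hsumC _ (hsupp i) z
    simp only [he]
    exact tendsto_finset_sum _ (fun d _ =>
      ((Complex.continuous_ofReal.tendsto _).comp (hconv d)).mul_const _)
  by_cases hq : q = 0
  · exact Or.inl hq
  right
  obtain ⟨d₀, hd₀⟩ : ∃ d, q.coeff d ≠ 0 := by
    by_contra h
    push_neg at h
    exact hq (MvPolynomial.ext _ _ (fun d => by rw [h d, MvPolynomial.coeff_zero]))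
  have hqnn : ∀ d, 0 ≤ q.coeff d := fun d =>
    ge_of_tendsto (hconv d) (Filter.Eventually.of_forall (fun i => hnn i d))
  intro z hz
  set x : Fin m → ℝ := fun j => (z j).re with hxdef
  set y : Fin m → ℝ := fun j => (z j).im with hydef
  have hx : ∀ j, 0 < x j := hz
  have hzx : z = fun j => ((x j : ℂ) + (y j : ℂ) * Complex.I) :=
    funext fun j => (Complex.re_add_im (z j)).symm
  have hpos : 0 < MvPolynomial.eval x q := by
    rw [hsumR q hqsupp x]
    have hd₀S : d₀ ∈ S := hqsupp (MvPolynomial.mem_support_iff.mpr hd₀)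
    have hterm : 0 < q.coeff d₀ * ∏ i ∈ d₀.support, x i ^ d₀ i :=
      mul_pos (lt_of_le_of_ne (hqnn d₀) (Ne.symm hd₀))
        (Finset.prod_pos fun i _ => pow_pos (hx i) _)
    refine lt_of_lt_of_le hterm
      (Finset.single_le_sum (f := fun d => q.coeff d * ∏ i ∈ d.support, x i ^ d i)
        (fun d _ => mul_nonneg (hqnn d)
          (Finset.prod_pos fun i _ => pow_pos (hx i) _).le) hd₀S)
  have hineq : ∀ i, |MvPolynomial.eval x (p i)|
      ≤ ‖MvPolynomial.aeval z (p i)‖ := by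
    intro i
    conv_rhs => rw [hzx]
    exact aux_key (hhom i) (hst i) x y hx
  have h1 : Filter.Tendsto (fun i => |MvPolynomial.eval x (p i)|)
      Filter.atTop (nhds |MvPolynomial.eval x q|) :=
    (continuous_abs.tendsto _).comp (htendR x)
  have h2 : Filter.Tendsto (fun i => ‖MvPolynomial.aeval z (p i)‖)
      Filter.atTop (nhds ‖MvPolynomial.aeval z q‖) :=
    (continuous_norm.tendsto _).comp (htendC z)
  have hfin : |MvPolynomial.eval x q| ≤ ‖MvPolynomial.aeval z q‖ :=
    le_of_tendsto_of_tendsto' h1 h2 hineq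
  have habs : 0 < ‖MvPolynomial.aeval z q‖ :=
    lt_of_lt_of_le (lt_of_lt_of_le hpos (le_abs_self _)) hfin
  intro h0
  rw [h0] at habs
  simp at habs
end

section
/- If p is a homogeneous H-stable polynomial of degree n in m variables with nonnegative coefficients, then the polynomial q(x_1,…,x_{m-1}) = (∂p/∂x_m)(x_1,…,x_{m-1},0) is either identically zero or H-stable. -/
/-- q(x_1,…,x_m) = (∂p/∂x_{m+1})(x_1,…,x_m,0): differentiate in the last
variable and then set it to zero. -/
noncomputable def restrictDeriv {m : ℕ} (p : MvPolynomial (Fin (m + 1)) ℝ) :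
    MvPolynomial (Fin m) ℝ :=
  MvPolynomial.aeval
    (Fin.snoc (fun i : Fin m => (MvPolynomial.X i : MvPolynomial (Fin m) ℝ)) 0)
    (MvPolynomial.pderiv (Fin.last m) p)

open Polynomial Metric Finset
namespace Stmt11

noncomputable def σe (m : ℕ) : Fin (m+1) ≃ Fin (m+1) := finRotate (m+1)

lemma σe_last (m : ℕ) : σe m (Fin.last m) = 0 := finRotate_last

lemma σe_castSucc {m : ℕ} (i : Fin m) : σe m i.castSucc = i.succ := by
  have hne : (i.castSucc : Fin (m+1)) ≠ Fin.last m := (Fin.castSucc_lt_last i).ne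
  apply Fin.ext
  show ((finRotate (m+1)) i.castSucc : ℕ) = _
  rw [coe_finRotate, if_neg hne, Fin.val_succ, Fin.coe_castSucc]

noncomputable def φA (m : ℕ) : MvPolynomial (Fin (m+1)) ℝ →ₐ[ℝ] Polynomial (MvPolynomial (Fin m) ℝ) :=
  (MvPolynomial.finSuccEquiv ℝ m).toAlgHom.comp (MvPolynomial.rename (σe m))

lemma φA_X_last (m : ℕ) : φA m (MvPolynomial.X (Fin.last m)) = Polynomial.X := by
  simp only [φA, AlgHom.coe_comp, AlgEquiv.toAlgHom_eq_coe, AlgHom.coe_coe,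
    Function.comp_apply, MvPolynomial.rename_X, σe_last, MvPolynomial.finSuccEquiv_X_zero]
  exact MvPolynomial.finSuccEquiv_X_zero

lemma φA_X_castSucc {m : ℕ} (i : Fin m) :
    φA m (MvPolynomial.X i.castSucc) = Polynomial.C (MvPolynomial.X i) := by
  simp only [φA, AlgHom.coe_comp, AlgEquiv.toAlgHom_eq_coe, AlgHom.coe_coe,
    Function.comp_apply, MvPolynomial.rename_X, σe_castSucc, MvPolynomial.finSuccEquiv_X_succ]
  exact MvPolynomial.finSuccEquiv_X_succ

lemma φA_coeff_coeff {m : ℕ} (p : MvPolynomial (Fin (m+1)) ℝ) (a : Fin m →₀ ℕ) (k : ℕ) :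
    MvPolynomial.coeff a ((φA m p).coeff k)
      = MvPolynomial.coeff (Finsupp.mapDomain (σe m).symm (Finsupp.cons k a)) p := by
  have h1 : MvPolynomial.coeff a ((φA m p).coeff k)
      = MvPolynomial.coeff (Finsupp.cons k a) (MvPolynomial.rename (σe m) p) := by
    simp [φA, MvPolynomial.finSuccEquiv_coeff_coeff]
  rw [h1]
  have h2 := MvPolynomial.coeff_rename_mapDomain (σe m) (σe m).injective p
    (Finsupp.mapDomain (σe m).symm (Finsupp.cons k a))
  rw [← Finsupp.mapDomain_comp] at h2
  have h3 : (⇑(σe m) ∘ ⇑(σe m).symm) = id := by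
    funext x; simp
  rw [h3, Finsupp.mapDomain_id] at h2
  exact h2

/-- derivative commutation -/
lemma φA_pderiv {m : ℕ} (p : MvPolynomial (Fin (m+1)) ℝ) :
    φA m (MvPolynomial.pderiv (Fin.last m) p) = derivative (φA m p) := by
  induction p using MvPolynomial.induction_on with
  | C a =>
      rw [MvPolynomial.pderiv_C, map_zero]
      have : φA m (MvPolynomial.C a) = Polynomial.C (MvPolynomial.C a) := by
        simpa using (φA m).commutes a
      rw [this, derivative_C]
  | add f g hf hg => simp [map_add, hf, hg]
  | mul_X f i hf =>
      rw [MvPolynomial.pderiv_mul, map_add, map_mul, map_mul, hf]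
      cases i using Fin.lastCases with
      | last =>
          rw [MvPolynomial.pderiv_X_self, map_one, mul_one, φA_X_last, map_mul, φA_X_last]
          simp [derivative_mul]
      | cast j =>
          rw [MvPolynomial.pderiv_X_of_ne (Fin.castSucc_lt_last j).ne, map_zero, mul_zero,
            add_zero, φA_X_castSucc, map_mul, φA_X_castSucc]
          simp [derivative_mul]


variable {m : ℕ}

/-- the univariate polynomial t ↦ p(z, t) -/
noncomputable def Fz (p : MvPolynomial (Fin (m+1)) ℝ) (z : Fin m → ℂ) : Polynomial ℂ :=
  Polynomial.map ((MvPolynomial.aeval z : MvPolynomial (Fin m) ℝ →ₐ[ℝ] ℂ) : MvPolynomial (Fin m) ℝ →+* ℂ) (φA m p)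

lemma coeff_Fz (p : MvPolynomial (Fin (m+1)) ℝ) (z : Fin m → ℂ) (k : ℕ) :
    (Fz p z).coeff k = MvPolynomial.aeval z ((φA m p).coeff k) := by
  simp [Fz, Polynomial.coeff_map]

lemma eval_Fz (p : MvPolynomial (Fin (m+1)) ℝ) (z : Fin m → ℂ) (t : ℂ) :
    (Fz p z).eval t = MvPolynomial.aeval (Fin.snoc z t) p := by
  have key : (((Polynomial.aeval t).restrictScalars ℝ).comp
      ((Polynomial.mapAlgHom (MvPolynomial.aeval z : MvPolynomial (Fin m) ℝ →ₐ[ℝ] ℂ)).comp (φA m)))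
      = (MvPolynomial.aeval (Fin.snoc z t) : MvPolynomial (Fin (m+1)) ℝ →ₐ[ℝ] ℂ) := by
    apply MvPolynomial.algHom_ext
    intro i
    cases i using Fin.lastCases with
    | last =>
        simp [φA_X_last, Fin.snoc_last, Polynomial.mapAlgHom_coe_ringHom]
    | cast j =>
        simp [φA_X_castSucc, Fin.snoc_castSucc, Polynomial.mapAlgHom_coe_ringHom]
  have := DFunLike.congr_fun key p
  simpa [Fz, Polynomial.mapAlgHom_coe_ringHom] using this

lemma restrictDeriv_eq_coeff_one (p : MvPolynomial (Fin (m+1)) ℝ) :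
    restrictDeriv p = (φA m p).coeff 1 := by
  set A := MvPolynomial (Fin m) ℝ
  have key : (((Polynomial.aeval (0:A)).restrictScalars ℝ).comp (φA m))
      = (MvPolynomial.aeval (Fin.snoc (fun i : Fin m => (MvPolynomial.X i : A)) 0)
          : MvPolynomial (Fin (m+1)) ℝ →ₐ[ℝ] A) := by
    apply MvPolynomial.algHom_ext
    intro i
    cases i using Fin.lastCases with
    | last => simp [φA_X_last, Fin.snoc_last]
    | cast j => simp [φA_X_castSucc, Fin.snoc_castSucc]
  have h1 : restrictDeriv p
      = Polynomial.aeval (0:A) (φA m (MvPolynomial.pderiv (Fin.last m) p)) :=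
    (DFunLike.congr_fun key (MvPolynomial.pderiv (Fin.last m) p)).symm
  rw [h1, φA_pderiv, Polynomial.aeval_def, Polynomial.eval₂_at_zero,
    Polynomial.coeff_derivative]
  simp
  rfl


/-- restriction of an m-variable polynomial to the complex line v + s·u, as a
polynomial in s -/
noncomputable def lineP (v u : Fin m → ℂ) (g : MvPolynomial (Fin m) ℝ) : Polynomial ℂ :=
  MvPolynomial.aeval (fun i => Polynomial.C (v i) + Polynomial.X * Polynomial.C (u i)) g

lemma eval_lineP (v u : Fin m → ℂ) (g : MvPolynomial (Fin m) ℝ) (s : ℂ) :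
    (lineP v u g).eval s = MvPolynomial.aeval (fun i => v i + s * u i) g := by
  have key : (((Polynomial.aeval s).restrictScalars ℝ).comp
      (MvPolynomial.aeval (fun i => Polynomial.C (v i) + Polynomial.X * Polynomial.C (u i))
        : MvPolynomial (Fin m) ℝ →ₐ[ℝ] Polynomial ℂ))
      = (MvPolynomial.aeval (fun i => v i + s * u i) : MvPolynomial (Fin m) ℝ →ₐ[ℝ] ℂ) := by
    apply MvPolynomial.algHom_ext
    intro i
    simp
    ring
  exact DFunLike.congr_fun key g

/-- p(v + s·u, t) as a polynomial in s, for fixed t -/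
noncomputable def Wt (p : MvPolynomial (Fin (m+1)) ℝ) (v u : Fin m → ℂ) (t : ℂ) :
    Polynomial ℂ :=
  MvPolynomial.aeval
    (Fin.snoc (fun i => Polynomial.C (v i) + Polynomial.X * Polynomial.C (u i))
      (Polynomial.C t)) p

lemma eval_Wt (p : MvPolynomial (Fin (m+1)) ℝ) (v u : Fin m → ℂ) (t s : ℂ) :
    (Wt p v u t).eval s = MvPolynomial.aeval (Fin.snoc (fun i => v i + s * u i) t) p := by
  have key : (((Polynomial.aeval s).restrictScalars ℝ).comp
      (MvPolynomial.aeval (Fin.snoc (fun i => Polynomial.C (v i) + Polynomial.X * Polynomial.C (u i))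
        (Polynomial.C t)) : MvPolynomial (Fin (m+1)) ℝ →ₐ[ℝ] Polynomial ℂ))
      = (MvPolynomial.aeval (Fin.snoc (fun i => v i + s * u i) t)
          : MvPolynomial (Fin (m+1)) ℝ →ₐ[ℝ] ℂ) := by
    apply MvPolynomial.algHom_ext
    intro i
    cases i using Fin.lastCases with
    | last => simp [Fin.snoc_last]
    | cast j =>
        simp [Fin.snoc_castSucc]
        ring
  exact DFunLike.congr_fun key p

lemma eval_Wt_Fz (p : MvPolynomial (Fin (m+1)) ℝ) (v u : Fin m → ℂ) (t s : ℂ) :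
    (Wt p v u t).eval s = (Fz p (fun i => v i + s * u i)).eval t := by
  rw [eval_Wt, eval_Fz]


/-! ### univariate analytic lemmas -/

/-- Minimum modulus principle on a closed ball. -/
lemma min_modulus {h : ℂ → ℂ} (hd : Differentiable ℂ h) {r c : ℝ} (hr : 0 < r)
    (hc : 0 < c) (hnv : ∀ s ∈ closedBall (0:ℂ) r, h s ≠ 0)
    (hsp : ∀ s ∈ sphere (0:ℂ) r, c ≤ ‖h s‖) : c ≤ ‖h 0‖ := by
  have h0mem : (0:ℂ) ∈ closedBall (0:ℂ) r := by simp [hr.le]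
  have h0 : h 0 ≠ 0 := hnv 0 h0mem
  have hdc : DiffContOnCl ℂ (fun s => (h s)⁻¹) (ball (0:ℂ) r) := by
    constructor
    · exact (hd.differentiableOn).inv (fun x hx => hnv x (ball_subset_closedBall hx))
    · rw [closure_ball (0:ℂ) hr.ne']
      exact (hd.continuous.continuousOn).inv₀ hnv
  have key : ‖(h 0)⁻¹‖ ≤ c⁻¹ := by
    refine Complex.norm_le_of_forall_mem_frontier_norm_le isBounded_ball hdc ?_ ?_
    · intro z hz
      rw [frontier_ball (0:ℂ) hr.ne'] at hz
      rw [norm_inv]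
      have h1 := hsp z hz
      have h2 : h z ≠ 0 := hnv z (sphere_subset_closedBall hz)
      exact (inv_le_inv₀ (norm_pos_iff.mpr h2) hc).mpr h1
    · rw [closure_ball (0:ℂ) hr.ne']
      exact h0mem
  rw [norm_inv] at key
  exact (inv_le_inv₀ (norm_pos_iff.mpr h0) hc).mp key

lemma multiset_prod_map_le {s : Multiset ℂ} {f g : ℂ → ℝ}
    (h : ∀ w ∈ s, 0 ≤ f w ∧ f w ≤ g w) : (s.map f).prod ≤ (s.map g).prod := by
  induction s using Multiset.induction_on with
  | empty => simp
  | cons a t ih =>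
      simp only [Multiset.map_cons, Multiset.prod_cons]
      have ha := h a (Multiset.mem_cons_self a t)
      have ht : ∀ w ∈ t, 0 ≤ f w ∧ f w ≤ g w := fun w hw => h w (Multiset.mem_cons_of_mem hw)
      have h1 : (0:ℝ) ≤ (t.map f).prod := by
        apply Multiset.prod_nonneg
        intro x hx
        obtain ⟨w, hw, rfl⟩ := Multiset.mem_map.mp hx
        exact (ht w hw).1
      exact mul_le_mul ha.2 (ih ht) h1 (ha.1.trans ha.2)

lemma multiset_prod_map_lt {s : Multiset ℂ} {f g : ℂ → ℝ} (hs : s ≠ 0)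
    (h : ∀ w ∈ s, 0 ≤ f w ∧ f w < g w) : (s.map f).prod < (s.map g).prod := by
  classical
  obtain ⟨a, ha⟩ := Multiset.exists_mem_of_ne_zero hs
  have hrec : a ::ₘ s.erase a = s := Multiset.cons_erase ha
  rw [← hrec]
  simp only [Multiset.map_cons, Multiset.prod_cons]
  have herase : ∀ w ∈ s.erase a, 0 ≤ f w ∧ f w ≤ g w := fun w hw =>
    ⟨(h w (Multiset.mem_of_mem_erase hw)).1, (h w (Multiset.mem_of_mem_erase hw)).2.le⟩
  have hle := multiset_prod_map_le herase
  have hgpos : (0:ℝ) < ((s.erase a).map g).prod := by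
    apply Multiset.prod_pos
    intro x hx
    obtain ⟨w, hw, rfl⟩ := Multiset.mem_map.mp hx
    have := h w (Multiset.mem_of_mem_erase hw)
    linarith [this.1, this.2]
  have ha2 := h a ha
  have h1 : (0:ℝ) ≤ ((s.erase a).map f).prod := by
    apply Multiset.prod_nonneg
    intro x hx
    obtain ⟨w, hw, rfl⟩ := Multiset.mem_map.mp hx
    exact (herase w hw).1
  calc f a * ((s.erase a).map f).prod ≤ f a * ((s.erase a).map g).prod := by
        exact mul_le_mul_of_nonneg_left hle ha2.1
    _ < g a * ((s.erase a).map g).prod := by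
        exact mul_lt_mul_of_pos_right ha2.2 hgpos

lemma abs_lt_abs_sub {w : ℂ} (hw : w.re ≤ 0) {ε : ℝ} (hε : 0 < ε) :
    ‖w‖ < ‖(ε:ℂ) - w‖ := by
  rw [Complex.norm_def, Complex.norm_def]
  apply Real.sqrt_lt_sqrt (Complex.normSq_nonneg w)
  rw [Complex.normSq_apply, Complex.normSq_apply]
  simp only [Complex.sub_re, Complex.sub_im, Complex.ofReal_re, Complex.ofReal_im, zero_sub]
  nlinarith

/-- key fact: a polynomial whose roots all have nonpositive real part and which is
nonconstant takes different values at ε > 0 and at 0. -/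
lemma eval_ne_eval_zero {g : Polynomial ℂ} (hdeg : 1 ≤ g.natDegree)
    (hroots : ∀ w, g.IsRoot w → w.re ≤ 0) {ε : ℝ} (hε : 0 < ε) :
    g.eval (ε:ℂ) ≠ g.eval 0 := by
  have hg0 : g ≠ 0 := by
    intro hgz
    rw [hgz] at hdeg
    simp at hdeg
  have hsplit : Splits g := IsAlgClosed.splits g
  have heq := hsplit.eq_prod_roots
  have hcard : Multiset.card g.roots = g.natDegree := splits_iff_card_roots.mp hsplit
  have hrne : g.roots ≠ 0 := by
    intro h0
    rw [h0] at hcard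
    simp at hcard
    omega
  have heval : ∀ x : ℂ, g.eval x = g.leadingCoeff * (g.roots.map (fun a => x - a)).prod := by
    intro x
    conv_lhs => rw [heq]
    rw [eval_mul, eval_C, eval_multiset_prod, Multiset.map_map]
    congr 2
    apply Multiset.map_congr rfl
    intro a _
    simp
  intro hcon
  rw [heval, heval] at hcon
  have hlc : g.leadingCoeff ≠ 0 := leadingCoeff_ne_zero.mpr hg0
  have hprod : (g.roots.map (fun a => (ε:ℂ) - a)).prod = (g.roots.map (fun a => (0:ℂ) - a)).prod :=
    mul_left_cancel₀ hlc hcon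
  have habs := congrArg (normHom : ℂ →*₀ ℝ) hprod
  rw [map_multiset_prod, map_multiset_prod, Multiset.map_map, Multiset.map_map] at habs
  have hlt : ((g.roots).map (fun a => ‖(0:ℂ) - a‖)).prod
      < ((g.roots).map (fun a => ‖(ε:ℂ) - a‖)).prod := by
    apply multiset_prod_map_lt hrne
    intro w hw
    have hre : w.re ≤ 0 := hroots w ((mem_roots hg0).mp hw)
    constructor
    · exact norm_nonneg _
    · have : ‖(0:ℂ) - w‖ = ‖w‖ := by
        rw [zero_sub, norm_neg]
      rw [this]
      exact abs_lt_abs_sub hre hε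
  simp only [Function.comp_def, normHom_apply] at habs
  rw [habs] at hlt
  exact lt_irrefl _ hlt


/-- choose a radius ≤ ρ whose sphere avoids the zeros of G -/
lemma exists_radius {G : Polynomial ℂ} (hG : G ≠ 0) {ρ : ℝ} (hρ : 0 < ρ) :
    ∃ r : ℝ, 0 < r ∧ r ≤ ρ ∧ ∀ s : ℂ, ‖s‖ = r → G.eval s ≠ 0 := by
  classical
  set S := (G.roots.toFinset.image (fun w => ‖w‖)).filter (fun x => 0 < x) with hS
  set m₀ := if hSne : S.Nonempty then min ρ (S.min' hSne) else ρ with hm₀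
  have hm₀pos : 0 < m₀ := by
    rw [hm₀]
    split
    · rename_i hSne
      apply lt_min hρ
      exact (Finset.mem_filter.mp (S.min'_mem hSne)).2
    · exact hρ
  have hm₀le : m₀ ≤ ρ := by
    rw [hm₀]
    split
    · exact min_le_left _ _
    · exact le_refl _
  refine ⟨m₀/2, by linarith, by linarith, ?_⟩
  intro s hs hev
  have hsr : s ∈ G.roots := (Polynomial.mem_roots hG).mpr hev
  have habs : ‖s‖ = m₀/2 := by rw [hs]
  have hmem : ‖s‖ ∈ S := by
    rw [hS]
    apply Finset.mem_filter.mpr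
    constructor
    · exact Finset.mem_image.mpr ⟨s, Multiset.mem_toFinset.mpr hsr, rfl⟩
    · rw [habs]; linarith
  have hSne : S.Nonempty := ⟨_, hmem⟩
  have h1 : m₀ ≤ ‖s‖ := by
    rw [hm₀, dif_pos hSne]
    exact le_trans (min_le_right _ _) (S.min'_le _ hmem)
  rw [habs] at h1
  linarith

/-- the Hurwitz-style contradiction: a polynomial vanishing at 0 yet uniformly
approximable on small closed balls by nonvanishing differentiable functions must
be the zero polynomial. -/
lemma hurwitz_key {G : Polynomial ℂ} (hG : G ≠ 0) (hG0 : G.eval 0 = 0) {ρ : ℝ} (hρ : 0 < ρ)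
    (happ : ∀ r, 0 < r → r ≤ ρ → ∀ e, 0 < e → ∃ h : ℂ → ℂ, Differentiable ℂ h ∧
      (∀ s ∈ closedBall (0:ℂ) r, h s ≠ 0) ∧
      (∀ s ∈ closedBall (0:ℂ) r, ‖h s - G.eval s‖ ≤ e)) : False := by
  obtain ⟨r, hr, hrρ, hsp⟩ := exists_radius hG hρ
  obtain ⟨s₀, hs₀mem, hs₀min'⟩ := (isCompact_sphere (0:ℂ) r).exists_isMinOn
    (NormedSpace.sphere_nonempty.mpr hr.le)
    (((G.continuous).norm.continuousOn) : ContinuousOn (fun s => ‖G.eval s‖) _)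
  have hs₀min := isMinOn_iff.mp hs₀min'
  set δ := ‖G.eval s₀‖ with hδ
  have hδpos : 0 < δ := by
    rw [hδ]
    apply norm_pos_iff.mpr
    exact hsp s₀ (mem_sphere_zero_iff_norm.mp hs₀mem)
  obtain ⟨h, hdiff, hnv, hbd⟩ := happ r hr hrρ (δ/3) (by linarith)
  have hmin : δ - δ/3 ≤ ‖h 0‖ := by
    apply min_modulus hdiff hr (by linarith) hnv
    intro s hsmem
    have h1 := hs₀min s hsmem
    have h2 := hbd s (sphere_subset_closedBall hsmem)
    have h3 := norm_sub_norm_le (G.eval s) (h s)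
    rw [norm_sub_rev] at h2
    linarith
  have h4 := hbd 0 (by simp [hr.le])
  rw [hG0, sub_zero] at h4
  linarith

/-- a nonzero polynomial with nonnegative coefficients is positive at the all-ones point -/
lemma eval_ones_pos {m : ℕ} {g : MvPolynomial (Fin m) ℝ} (hg : g ≠ 0)
    (h0 : ∀ d, 0 ≤ g.coeff d) : 0 < MvPolynomial.eval (fun _ => (1:ℝ)) g := by
  rw [MvPolynomial.eval_eq]
  simp only [one_pow, Finset.prod_const_one, mul_one]
  apply Finset.sum_pos
  · intro d hd
    exact lt_of_le_of_ne (h0 d) (Ne.symm (MvPolynomial.mem_support_iff.mp hd))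
  · rw [Finset.nonempty_iff_ne_empty]
    intro hemp
    exact hg (MvPolynomial.support_eq_empty.mp hemp)

lemma aeval_ones {m : ℕ} (g : MvPolynomial (Fin m) ℝ) :
    MvPolynomial.aeval (fun _ => (1:ℂ)) g
      = ((MvPolynomial.eval (fun _ => (1:ℝ)) g : ℝ) : ℂ) := by
  rw [MvPolynomial.aeval_def]
  have h := MvPolynomial.eval₂_comp_left (algebraMap ℝ ℂ) (RingHom.id ℝ)
    (fun _ : Fin m => (1:ℝ)) g
  simp only [RingHom.comp_id, Function.comp_def, map_one] at h
  rw [← h, MvPolynomial.eval₂_id]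
  simp [Complex.coe_algebraMap]


lemma exists_rho {m : ℕ} {z u : Fin m → ℂ} (hz : ∀ i, 0 < (z i).re) :
    ∃ ρ : ℝ, 0 < ρ ∧ ∀ s : ℂ, ‖s‖ ≤ ρ → ∀ i, 0 < (z i + s * u i).re := by
  by_cases hm : Nonempty (Fin m)
  · have huniv : (Finset.univ : Finset (Fin m)).Nonempty := Finset.univ_nonempty
    refine ⟨Finset.univ.inf' huniv (fun i => (z i).re / (‖u i‖ + 1)), ?_, ?_⟩
    · rw [Finset.lt_inf'_iff]
      intro i _
      exact div_pos (hz i) (by positivity)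
    · intro s hs i
      set ρ := Finset.univ.inf' huniv (fun i => (z i).re / (‖u i‖ + 1)) with hρdef
      have hρpos : 0 < ρ := by
        rw [hρdef, Finset.lt_inf'_iff]
        intro i _
        exact div_pos (hz i) (by positivity)
      have h1 : ρ ≤ (z i).re / (‖u i‖ + 1) := Finset.inf'_le _ (Finset.mem_univ i)
      have h2 : ρ * (‖u i‖ + 1) ≤ (z i).re :=
        (le_div_iff₀ (by positivity : (0:ℝ) < ‖u i‖ + 1)).mp h1
      have h3 : ‖s * u i‖ ≤ ρ * ‖u i‖ := by
        rw [norm_mul]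
        exact mul_le_mul_of_nonneg_right hs (norm_nonneg _)
      have h4 : -(ρ * ‖u i‖) ≤ (s * u i).re := by
        have := Complex.abs_re_le_norm (s * u i)
        have h5 : -(‖s * u i‖) ≤ (s * u i).re := by
          linarith [neg_abs_le (s * u i).re, Complex.abs_re_le_norm (s * u i)]
        linarith
      rw [Complex.add_re]
      nlinarith [hρpos]
  · refine ⟨1, one_pos, ?_⟩
    intro s _ i
    exact absurd ⟨i⟩ hm

lemma poly_bound_on_ball (g : Polynomial ℂ) (r : ℝ) :
    ∃ M : ℝ, 0 ≤ M ∧ ∀ s ∈ closedBall (0:ℂ) r, ‖g.eval s‖ ≤ M := by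
  rcases lt_or_ge r 0 with h | h
  · exact ⟨0, le_refl _, fun s hs => absurd hs (by simp [Metric.closedBall_eq_empty.mpr h])⟩
  · obtain ⟨s₀, _, hmax⟩ := (isCompact_closedBall (0:ℂ) r).exists_isMaxOn
      ⟨0, by simp [h]⟩ (((g.continuous).norm.continuousOn) :
        ContinuousOn (fun s => ‖g.eval s‖) _)
    exact ⟨‖g.eval s₀‖, norm_nonneg _, fun s hs => isMaxOn_iff.mp hmax s hs⟩

lemma sum_mul_norm_le {N : ℕ} (a c : ℕ → ℂ) (Mk : ℕ → ℝ) {t : ℝ}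
    (h1 : ∀ k ∈ Finset.range N, ‖a k‖ ≤ Mk k) (h2 : ∀ k ∈ Finset.range N, ‖c k‖ ≤ t)
    (ht : 0 ≤ t) :
    ‖∑ k ∈ Finset.range N, a k * c k‖ ≤ (∑ k ∈ Finset.range N, Mk k) * t := by
  calc ‖∑ k ∈ Finset.range N, a k * c k‖ ≤ ∑ k ∈ Finset.range N, ‖a k * c k‖ :=
        norm_sum_le _ _
    _ ≤ ∑ k ∈ Finset.range N, Mk k * t := by
        apply Finset.sum_le_sum
        intro k hk
        rw [norm_mul]
        exact mul_le_mul (h1 k hk) (h2 k hk) (norm_nonneg _)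
          ((norm_nonneg (a k)).trans (h1 k hk))
    _ = (∑ k ∈ Finset.range N, Mk k) * t := by rw [← Finset.sum_mul]


lemma Wt_expand {m : ℕ} (p : MvPolynomial (Fin (m+1)) ℝ) (v u : Fin m → ℂ) (t s : ℂ) :
    (Wt p v u t).eval s = ∑ k ∈ Finset.range ((φA m p).natDegree + 1),
      (lineP v u ((φA m p).coeff k)).eval s * t ^ k := by
  rw [eval_Wt_Fz]
  have hdeg : (Fz p (fun i => v i + s * u i)).natDegree < (φA m p).natDegree + 1 :=
    Nat.lt_succ_of_le Polynomial.natDegree_map_le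
  rw [Polynomial.eval_eq_sum_range' hdeg t]
  apply Finset.sum_congr rfl
  intro k _
  rw [coeff_Fz, eval_lineP]

lemma stable_snoc {m : ℕ} {p : MvPolynomial (Fin (m+1)) ℝ} (hst : HStable p)
    {z : Fin m → ℂ} (hz : ∀ i, 0 < (z i).re) {t : ℂ} (ht : 0 < t.re) :
    MvPolynomial.aeval (Fin.snoc z t) p ≠ 0 := by
  apply hst
  intro i
  cases i using Fin.lastCases with
  | last => rw [Fin.snoc_last]; exact ht
  | cast j => rw [Fin.snoc_castSucc]; exact hz j

lemma roots_Fz {m : ℕ} {p : MvPolynomial (Fin (m+1)) ℝ} (hst : HStable p)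
    {z : Fin m → ℂ} (hz : ∀ i, 0 < (z i).re) :
    ∀ w : ℂ, (Fz p z).IsRoot w → w.re ≤ 0 := by
  intro w hw
  by_contra hcon
  push_neg at hcon
  apply stable_snoc hst hz hcon
  rw [← eval_Fz]
  exact hw

lemma leading_stable {m : ℕ} {p : MvPolynomial (Fin (m+1)) ℝ}
    (hnn : ∀ d, 0 ≤ p.coeff d) (hst : HStable p) (hPp : φA m p ≠ 0)
    {z : Fin m → ℂ} (hz : ∀ i, 0 < (z i).re) :
    MvPolynomial.aeval z ((φA m p).coeff (φA m p).natDegree) ≠ 0 := by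
  set D := (φA m p).natDegree with hDdef
  intro h0
  set u : Fin m → ℂ := fun i => 1 - z i with hu
  obtain ⟨ρ, hρ, hball⟩ := exists_rho (u := u) hz
  set CD := (φA m p).coeff D with hCDdef
  have hCDnn : ∀ d, 0 ≤ CD.coeff d := fun d => by
    rw [hCDdef, MvPolynomial.coeff]
    rw [← MvPolynomial.coeff, φA_coeff_coeff]
    exact hnn _
  have hCDne : CD ≠ 0 := by
    rw [hCDdef]
    exact Polynomial.leadingCoeff_ne_zero.mpr hPp
  set G := lineP z u CD with hGdef
  have hG0 : G.eval 0 = 0 := by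
    rw [hGdef, eval_lineP]
    have hfun : (fun i => z i + 0 * u i) = z := by funext i; ring
    rw [hfun, ← h0]
  have hG1 : G.eval 1 ≠ 0 := by
    rw [hGdef, eval_lineP]
    have hfun : (fun i => z i + 1 * u i) = fun _ => (1:ℂ) := by
      funext i; rw [hu]; ring
    rw [hfun, aeval_ones]
    simp only [ne_eq, Complex.ofReal_eq_zero]
    exact ne_of_gt (eval_ones_pos hCDne hCDnn)
  have hGne : G ≠ 0 := fun h => hG1 (by rw [h]; simp)
  apply hurwitz_key hGne hG0 hρ
  intro r hr hrρ e he
  choose Mk hMk0 hMkb using fun k : ℕ =>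
    poly_bound_on_ball (lineP z u ((φA m p).coeff k)) r
  set M := ∑ k ∈ Finset.range (D+1), Mk k with hM
  have hM0 : 0 ≤ M := Finset.sum_nonneg (fun k _ => hMk0 k)
  set T : ℝ := max 1 ((M+1)/e) with hT
  have hT1 : 1 ≤ T := le_max_left _ _
  have hTpos : 0 < T := lt_of_lt_of_le one_pos hT1
  have hTC : (T:ℂ) ≠ 0 := by exact_mod_cast hTpos.ne'
  refine ⟨fun s => ((T:ℂ)^D)⁻¹ * (Wt p z u (T:ℂ)).eval s, ?_, ?_, ?_⟩
  · exact Differentiable.const_mul ((Wt p z u (T:ℂ)).differentiable) _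
  · intro s hs
    apply mul_ne_zero (inv_ne_zero (pow_ne_zero _ hTC))
    rw [eval_Wt]
    apply stable_snoc hst
    · intro i
      apply hball
      rw [Metric.mem_closedBall, dist_zero_right] at hs
      exact le_trans hs hrρ
    · simpa using hTpos
  · intro s hs
    have hsr : ∀ i, 0 < (z i + s * u i).re := by
      intro i
      apply hball
      rw [Metric.mem_closedBall, dist_zero_right] at hs
      exact le_trans hs hrρ
    -- difference identity
    set a : ℕ → ℂ := fun k => (lineP z u ((φA m p).coeff k)).eval s with ha
    set c : ℕ → ℂ := fun k => (T:ℂ)^k * ((T:ℂ)^D)⁻¹ - (if k = D then 1 else 0) with hc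
    have hGs : G.eval s = a D := rfl
    have hdiff : ((T:ℂ)^D)⁻¹ * (Wt p z u (T:ℂ)).eval s - G.eval s
        = ∑ k ∈ Finset.range (D+1), a k * c k := by
      rw [Wt_expand, hGs]
      have hD : (∑ k ∈ Finset.range (D+1), if k = D then a k else 0) = a D := by
        rw [Finset.sum_ite_eq' (Finset.range (D+1)) D (fun k => a k)]
        simp
      rw [← hD, Finset.mul_sum, ← Finset.sum_sub_distrib]
      apply Finset.sum_congr rfl
      intro k _
      show ((T:ℂ)^D)⁻¹ * (a k * (T:ℂ)^k) - (if k = D then a k else 0)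
          = a k * ((T:ℂ)^k * ((T:ℂ)^D)⁻¹ - (if k = D then 1 else 0))
      by_cases hkD : k = D
      · rw [if_pos hkD, if_pos hkD]; ring
      · rw [if_neg hkD, if_neg hkD]; ring
    rw [hdiff]
    have hnorm : ∀ k ∈ Finset.range (D+1), ‖c k‖ ≤ 1/T := by
      intro k hk
      show ‖(T:ℂ)^k * ((T:ℂ)^D)⁻¹ - (if k = D then 1 else 0)‖ ≤ 1/T
      by_cases hkD : k = D
      · subst hkD
        rw [if_pos rfl, mul_inv_cancel₀ (pow_ne_zero _ hTC), sub_self, norm_zero]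
        positivity
      · rw [if_neg hkD, sub_zero, norm_mul, norm_inv, norm_pow, norm_pow,
          Complex.norm_real, Real.norm_eq_abs, abs_of_pos hTpos]
        have hkD' : k + 1 ≤ D := by
          rw [Finset.mem_range] at hk
          omega
        rw [div_eq_mul_inv, one_mul, ← div_eq_mul_inv,
          div_le_iff₀ (by positivity : (0:ℝ) < T ^ D), inv_mul_eq_div, le_div_iff₀ hTpos]
        calc T ^ k * T = T ^ (k+1) := by ring
          _ ≤ T ^ D := pow_le_pow_right₀ hT1 hkD'
    have hbound := sum_mul_norm_le a c Mk
      (fun k _ => hMkb k s hs) hnorm (by positivity)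
    apply le_trans hbound
    rw [← hM]
    -- M * (1/T) ≤ e
    rw [mul_one_div, div_le_iff₀ hTpos]
    have h5 : (M+1)/e ≤ T := le_max_right _ _
    have h6 : e * ((M+1)/e) ≤ e * T := mul_le_mul_of_nonneg_left h5 he.le
    rw [mul_div_cancel₀ _ he.ne'] at h6
    linarith

end Stmt11

open Stmt11 in
/-- if p ∈ Hom_+(m+1, n) is H-stable then
q = (∂p/∂x_{m+1})(·,…,·,0) is either zero or H-stable. -/
theorem stmt_11 (m n : ℕ) (p : MvPolynomial (Fin (m + 1)) ℝ)
    (hhom : p.IsHomogeneous n) (hnn : ∀ d, 0 ≤ p.coeff d) (hst : HStable p) :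
    restrictDeriv p = 0 ∨ HStable (restrictDeriv p) := by
  by_cases hQ : restrictDeriv p = 0
  · exact Or.inl hQ
  right
  intro z hz
  rw [restrictDeriv_eq_coeff_one p]
  have hC1 : (φA m p).coeff 1 ≠ 0 := by
    rw [← restrictDeriv_eq_coeff_one p]; exact hQ
  have hPp : φA m p ≠ 0 := fun h => hC1 (by rw [h]; simp)
  set D := (φA m p).natDegree with hDdef
  have hD1 : 1 ≤ D := Polynomial.le_natDegree_of_ne_zero hC1
  intro h0
  set u : Fin m → ℂ := fun i => 1 - z i with hu
  obtain ⟨ρ, hρ, hball⟩ := exists_rho (u := u) hz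
  set C1 := (φA m p).coeff 1 with hC1def
  have hC1nn : ∀ d, 0 ≤ C1.coeff d := fun d => by
    rw [hC1def, MvPolynomial.coeff]
    rw [← MvPolynomial.coeff, φA_coeff_coeff]
    exact hnn _
  set G := lineP z u C1 with hGdef
  have hG0 : G.eval 0 = 0 := by
    rw [hGdef, eval_lineP]
    have hfun : (fun i => z i + 0 * u i) = z := by funext i; ring
    rw [hfun, ← h0]
  have hG1 : G.eval 1 ≠ 0 := by
    rw [hGdef, eval_lineP]
    have hfun : (fun i => z i + 1 * u i) = fun _ => (1:ℂ) := by
      funext i; rw [hu]; ring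
    rw [hfun, aeval_ones]
    simp only [ne_eq, Complex.ofReal_eq_zero]
    exact ne_of_gt (eval_ones_pos hC1 hC1nn)
  have hGne : G ≠ 0 := fun h => hG1 (by rw [h]; simp)
  apply hurwitz_key hGne hG0 hρ
  intro r hr hrρ e he
  choose Mk hMk0 hMkb using fun k : ℕ =>
    poly_bound_on_ball (lineP z u ((φA m p).coeff k)) r
  set M := ∑ k ∈ Finset.range (D+1), Mk k with hM
  have hM0 : 0 ≤ M := Finset.sum_nonneg (fun k _ => hMk0 k)
  set ε : ℝ := min 1 (e/(M+1)) with hε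
  have hεpos : 0 < ε := lt_min one_pos (by positivity)
  have hε1 : ε ≤ 1 := min_le_left _ _
  have hεC : (ε:ℂ) ≠ 0 := by exact_mod_cast hεpos.ne'
  refine ⟨fun s => ((ε:ℂ))⁻¹ * ((Wt p z u (ε:ℂ)).eval s - (Wt p z u 0).eval s), ?_, ?_, ?_⟩
  · exact Differentiable.const_mul
      (((Wt p z u (ε:ℂ)).differentiable).sub ((Wt p z u 0).differentiable)) _
  · intro s hs
    have hw : ∀ i, 0 < (z i + s * u i).re := by
      intro i
      apply hball
      rw [Metric.mem_closedBall, dist_zero_right] at hs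
      exact le_trans hs hrρ
    apply mul_ne_zero (inv_ne_zero hεC)
    rw [eval_Wt_Fz, eval_Wt_Fz, sub_ne_zero]
    apply eval_ne_eval_zero ?_ (roots_Fz hst hw) hεpos
    · -- natDegree ≥ 1
      have hcoeffD : (Fz p (fun i => z i + s * u i)).coeff D ≠ 0 := by
        rw [coeff_Fz]
        exact leading_stable hnn hst hPp hw
      exact le_trans hD1 (Polynomial.le_natDegree_of_ne_zero hcoeffD)
  · intro s hs
    set a : ℕ → ℂ := fun k => (lineP z u ((φA m p).coeff k)).eval s with ha
    set c : ℕ → ℂ := fun k => ((ε:ℂ)^k - (0:ℂ)^k) * ((ε:ℂ))⁻¹ - (if k = 1 then 1 else 0)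
      with hc
    have hGs : G.eval s = a 1 := rfl
    have hdiff : ((ε:ℂ))⁻¹ * ((Wt p z u (ε:ℂ)).eval s - (Wt p z u 0).eval s) - G.eval s
        = ∑ k ∈ Finset.range (D+1), a k * c k := by
      rw [Wt_expand, Wt_expand, hGs]
      have hD : (∑ k ∈ Finset.range (D+1), if k = 1 then a k else 0) = a 1 := by
        rw [Finset.sum_ite_eq' (Finset.range (D+1)) 1 (fun k => a k)]
        simp [Finset.mem_range, Nat.lt_succ_of_le hD1]
      rw [← hD, ← Finset.sum_sub_distrib, Finset.mul_sum, ← Finset.sum_sub_distrib]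
      apply Finset.sum_congr rfl
      intro k _
      show ((ε:ℂ))⁻¹ * (a k * (ε:ℂ)^k - a k * (0:ℂ)^k) - (if k = 1 then a k else 0)
          = a k * (((ε:ℂ)^k - (0:ℂ)^k) * ((ε:ℂ))⁻¹ - (if k = 1 then 1 else 0))
      by_cases hk1 : k = 1
      · rw [if_pos hk1, if_pos hk1]; ring
      · rw [if_neg hk1, if_neg hk1]; ring
    rw [hdiff]
    have hnorm : ∀ k ∈ Finset.range (D+1), ‖c k‖ ≤ ε := by
      intro k _
      show ‖((ε:ℂ)^k - (0:ℂ)^k) * ((ε:ℂ))⁻¹ - (if k = 1 then 1 else 0)‖ ≤ ε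
      match k with
      | 0 => simp [hεpos.le]
      | 1 =>
          rw [if_pos rfl]
          simp only [pow_one]
          rw [sub_zero, mul_inv_cancel₀ hεC, sub_self, norm_zero]
          exact hεpos.le
      | (k+2) =>
          rw [if_neg (by omega), sub_zero, zero_pow (by omega : k+2 ≠ 0), sub_zero]
          have hre : ((ε:ℂ)^(k+2)) * ((ε:ℂ))⁻¹ = (ε:ℂ)^(k+1) := by
            rw [pow_succ]
            field_simp
          rw [hre]
          rw [← Complex.ofReal_pow, Complex.norm_real, Real.norm_eq_abs,
            abs_of_pos (by positivity)]
          calc ε^(k+1) ≤ ε^1 := pow_le_pow_of_le_one hεpos.le hε1 (by omega)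
            _ = ε := pow_one ε
    have hbound := sum_mul_norm_le a c Mk (fun k _ => hMkb k s hs) hnorm hεpos.le
    apply le_trans hbound
    rw [← hM]
    calc M * ε ≤ M * (e/(M+1)) := mul_le_mul_of_nonneg_left (min_le_right _ _) hM0
      _ = (M/(M+1)) * e := by ring
      _ ≤ 1 * e := mul_le_mul_of_nonneg_right
          ((div_le_one (by positivity)).mpr (by linarith)) he.le
      _ = e := one_mul e
end

section
/- If p ∈ Hom_+(n,n) is doubly stochastic, i.e., (∂p/∂x_i)(1,…,1) = 1 for all i, then Cap(p) = 1. -/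
/-- Cap(p) = inf_{x > 0} p(x)/(x_1 ⋯ x_m). -/
noncomputable def Cap {m : ℕ} (p : MvPolynomial (Fin m) ℝ) : ℝ :=
  sInf {c : ℝ | ∃ x : Fin m → ℝ, (∀ i, 0 < x i) ∧
    c = MvPolynomial.eval x p / ∏ i, x i}

open MvPolynomial Finset

/-- a doubly stochastic p ∈ Hom_+(n,n), i.e. with
(∂p/∂x_i)(1,…,1) = 1 for all i, has Cap(p) = 1. -/
theorem stmt_15 (n : ℕ) (hn : 0 < n) (p : MvPolynomial (Fin n) ℝ)
    (hhom : p.IsHomogeneous n) (hnn : ∀ d, 0 ≤ p.coeff d)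
    (hds : ∀ i : Fin n, MvPolynomial.eval (fun _ => (1 : ℝ)) (MvPolynomial.pderiv i p) = 1) :
    Cap p = 1 := by
  -- column sums of the coefficient matrix
  have hc : ∀ i : Fin n, ∑ d ∈ p.support, p.coeff d * (d i : ℝ) = 1 := by
    intro i
    rw [← hds i, ← p.support_sum_monomial_coeff, map_sum, map_sum]
    simp [pderiv_monomial, eval_monomial, Finsupp.prod]
  -- every monomial in the support has total degree n
  have hdeg : ∀ d ∈ p.support, ∑ i : Fin n, (d i : ℝ) = (n : ℝ) := by
    intro d hd
    have h1 : Finsupp.degree d = n := by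
      rw [Finsupp.degree_eq_weight_one]
      exact hhom (mem_support_iff.mp hd)
    have h2 : ∑ i : Fin n, d i = Finsupp.degree d := by
      rw [Finsupp.degree]
      exact (Finset.sum_subset (Finset.subset_univ _)
        (fun i _ hi => Finsupp.notMem_support_iff.mp hi)).symm
    rw [← Nat.cast_sum, h2, h1]
  -- coefficients sum to 1
  have hsum : ∑ d ∈ p.support, p.coeff d = 1 := by
    have := Finset.sum_congr rfl (fun i (_ : i ∈ (univ : Finset (Fin n))) => hc i)
    rw [Finset.sum_const, Finset.sum_comm] at this
    simp only [← Finset.mul_sum] at this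
    rw [Finset.sum_congr rfl (fun d hd => by rw [hdeg d hd])] at this
    rw [← Finset.sum_mul] at this
    have hn' : (n : ℝ) ≠ 0 := Nat.cast_ne_zero.mpr hn.ne'
    simp only [Finset.card_univ, Fintype.card_fin, nsmul_eq_mul, mul_one] at this
    exact mul_right_cancel₀ hn' (this.trans (one_mul _).symm)
  -- p(1,…,1) = 1
  have hval1 : MvPolynomial.eval (fun _ => (1 : ℝ)) p = 1 := by
    rw [eval_eq']
    simpa using hsum
  -- AM-GM lower bound: for positive x, ∏ x ≤ p(x)
  have hlb : ∀ x : Fin n → ℝ, (∀ i, 0 < x i) → ∏ i, x i ≤ MvPolynomial.eval x p := by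
    intro x hx
    have amgm := Real.geom_mean_le_arith_mean_weighted p.support
      (fun d => p.coeff d) (fun d => ∏ i, x i ^ d i)
      (fun d _ => hnn d) hsum
      (fun d _ => Finset.prod_nonneg fun i _ => pow_nonneg (hx i).le _)
    rw [← eval_eq'] at amgm
    refine le_trans (le_of_eq ?_) amgm
    -- ∏ i, x i = ∏ d, (∏ i, x i ^ d i) ^ coeff d
    have : ∀ d ∈ p.support, (∏ i, x i ^ d i) ^ p.coeff d
        = ∏ i, x i ^ ((d i : ℝ) * p.coeff d) := by
      intro d _
      rw [← Real.finset_prod_rpow _ _ (fun i _ => pow_nonneg (hx i).le _)]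
      refine Finset.prod_congr rfl fun i _ => ?_
      rw [← Real.rpow_natCast (x i) (d i), ← Real.rpow_mul (hx i).le]
    rw [Finset.prod_congr rfl this, Finset.prod_comm]
    refine (Finset.prod_congr rfl fun i _ => ?_).symm
    rw [← Real.rpow_sum_of_pos (hx i)]
    have : ∑ d ∈ p.support, (d i : ℝ) * p.coeff d = 1 := by
      rw [← hc i]; exact Finset.sum_congr rfl fun d _ => mul_comm _ _
    rw [this, Real.rpow_one]
  -- conclude
  have hmem : (1 : ℝ) ∈ {c : ℝ | ∃ x : Fin n → ℝ, (∀ i, 0 < x i) ∧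
      c = MvPolynomial.eval x p / ∏ i, x i} := by
    exact ⟨fun _ => 1, fun _ => one_pos, by simp [hval1]⟩
  have hlb' : ∀ c ∈ {c : ℝ | ∃ x : Fin n → ℝ, (∀ i, 0 < x i) ∧
      c = MvPolynomial.eval x p / ∏ i, x i}, (1 : ℝ) ≤ c := by
    rintro c ⟨x, hx, rfl⟩
    have hprod : 0 < ∏ i, x i := Finset.prod_pos fun i _ => hx i
    exact (one_le_div hprod).mpr (hlb x hx)
  exact le_antisymm (csInf_le ⟨1, hlb'⟩ hmem) (le_csInf ⟨1, hmem⟩ hlb')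
end
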